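/- arXiv:2602.15299 — 7 statements merged into one kernel-verified Lean document; each statement's English description precedes it below -/
import Mathlib

section
/- Let (k_n)_{n≥0} be the increasing enumeration of the integer Cantor set C_{b,D} with digit set D of size δ = |D| (containing 0). Then for all i ≥ 0, n ≥ 0, and 0 ≤ j < δ^i, one has k_{δ^i n + j} = b^i k_n + k_j. -/
open MeasureTheory Filter Finset

/-- The integer Cantor set with base `b` and digit set `D`. -/
def intCantorSet (b : ℕ) (D : Finset ℕ) : Set ℕ :=
  {m | ∀ d ∈ Nat.digits b m, d ∈ D}

section aux

variable {b : ℕ} {D : Finset ℕ}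

lemma aux_div {B t d : ℕ} (hB : 0 < B) (hd : d < B) : (B * t + d) / B = t := by
  rw [Nat.mul_add_div hB, Nat.div_eq_of_lt hd, add_zero]

lemma aux_mod {B t d : ℕ} (hd : d < B) : (B * t + d) % B = d := by
  rw [Nat.mul_add_mod, Nat.mod_eq_of_lt hd]

lemma zero_mem_cantor : 0 ∈ intCantorSet b D := by
  intro d hd
  simp [Nat.digits_zero] at hd

lemma step_mem (hb : 2 ≤ b) (h0 : 0 ∈ D) (t d : ℕ) (hd : d < b) :
    (b * t + d ∈ intCantorSet b D) ↔ (d ∈ D ∧ t ∈ intCantorSet b D) := by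
  rcases Nat.eq_zero_or_pos (b * t + d) with h | h
  · have ht : t = 0 := by
      rcases Nat.eq_zero_or_pos t with h' | h'
      · exact h'
      · exfalso; nlinarith
    have hd0 : d = 0 := by omega
    subst ht; subst hd0
    simp only [mul_zero, zero_add]
    exact ⟨fun _ => ⟨h0, zero_mem_cantor⟩, fun _ => zero_mem_cantor⟩
  · have hb0 : 0 < b := by omega
    have hdig : Nat.digits b (b * t + d) = d :: Nat.digits b t := by
      rw [Nat.digits_def' (by omega : 1 < b) h, aux_mod hd, aux_div hb0 hd]
    simp only [intCantorSet, Set.mem_setOf_eq, hdig, List.mem_cons]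
    constructor
    · intro hAll
      exact ⟨hAll d (Or.inl rfl), fun e he => hAll e (Or.inr he)⟩
    · rintro ⟨h1, h2⟩ e (rfl | he)
      · exact h1
      · exact h2 e he

lemma split_mem (hb : 2 ≤ b) (h0 : 0 ∈ D) :
    ∀ i x y, y < b ^ i →
      (b ^ i * x + y ∈ intCantorSet b D ↔ x ∈ intCantorSet b D ∧ y ∈ intCantorSet b D) := by
  intro i
  induction i with
  | zero =>
    intro x y hy
    have hy0 : y = 0 := by simpa [Nat.lt_one_iff] using hy
    subst hy0
    simp only [pow_zero, one_mul, add_zero]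
    exact ⟨fun h => ⟨h, zero_mem_cantor⟩, fun h => h.1⟩
  | succ i ih =>
    intro x y hy
    have hb0 : 0 < b := by omega
    have hyd : y % b < b := Nat.mod_lt _ hb0
    have hydiv : y / b < b ^ i := by
      rw [Nat.div_lt_iff_lt_mul hb0]
      calc y < b ^ (i + 1) := hy
        _ = b ^ i * b := by ring
    have hrw : b ^ (i + 1) * x + y = b * (b ^ i * x + y / b) + y % b := by
      conv_lhs => rw [← Nat.div_add_mod y b]
      rw [pow_succ]
      ring
    rw [hrw, step_mem hb h0 _ _ hyd, ih x (y / b) hydiv]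
    have hy2 : y = b * (y / b) + y % b := (Nat.div_add_mod y b).symm
    constructor
    · rintro ⟨h1, h2, h3⟩
      refine ⟨h2, ?_⟩
      rw [hy2, step_mem hb h0 _ _ hyd]
      exact ⟨h1, h3⟩
    · rintro ⟨h1, h2⟩
      rw [hy2, step_mem hb h0 _ _ hyd] at h2
      exact ⟨h2.1, h1, h2.2⟩

/-- The finset of Cantor-set elements below `b ^ i`. -/
def cantorFinset (b : ℕ) (D : Finset ℕ) (i : ℕ) : Finset ℕ :=
  (Finset.range (b ^ i)).filter (fun m => ∀ d ∈ Nat.digits b m, d ∈ D)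

lemma mem_cantorFinset {i m : ℕ} :
    m ∈ cantorFinset b D i ↔ m < b ^ i ∧ m ∈ intCantorSet b D := by
  simp [cantorFinset, intCantorSet, Set.mem_setOf_eq]

lemma card_cantorFinset (hb : 2 ≤ b) (hDb : ∀ d ∈ D, d < b) (h0 : 0 ∈ D) :
    ∀ i, (cantorFinset b D i).card = D.card ^ i := by
  intro i
  induction i with
  | zero =>
    have : cantorFinset b D 0 = {0} := by
      ext m
      rw [mem_cantorFinset]
      simp only [pow_zero, Nat.lt_one_iff, mem_singleton]
      constructor
      · rintro ⟨rfl, _⟩; rfl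
      · rintro rfl; exact ⟨rfl, zero_mem_cantor⟩
    rw [this]; simp
  | succ i ih =>
    have hb0 : 0 < b := by omega
    have himg : cantorFinset b D (i + 1) =
        (D ×ˢ cantorFinset b D i).image (fun p => b * p.2 + p.1) := by
      ext m
      rw [mem_cantorFinset]
      simp only [mem_image, mem_product]
      constructor
      · rintro ⟨hlt, hmem⟩
        have hm2 : m = b * (m / b) + m % b := (Nat.div_add_mod m b).symm
        rw [hm2, step_mem hb h0 _ _ (Nat.mod_lt _ hb0)] at hmem
        refine ⟨(m % b, m / b), ⟨hmem.1, ?_⟩, ?_⟩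
        · rw [mem_cantorFinset]
          refine ⟨?_, hmem.2⟩
          rw [Nat.div_lt_iff_lt_mul hb0]
          calc m < b ^ (i + 1) := hlt
            _ = b ^ i * b := by ring
        · show b * (m / b) + m % b = m
          omega
      · rintro ⟨⟨d, t⟩, ⟨hd, ht⟩, rfl⟩
        rw [mem_cantorFinset] at ht
        constructor
        · have hdb : d < b := hDb d hd
          calc b * t + d < b * t + b := by omega
            _ = b * (t + 1) := by ring
            _ ≤ b * b ^ i := Nat.mul_le_mul_left _ ht.1
            _ = b ^ (i + 1) := by ring
        · rw [step_mem hb h0 _ _ (hDb d hd)]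
          exact ⟨hd, ht.2⟩
    rw [himg, Finset.card_image_of_injOn, Finset.card_product, ih, pow_succ]
    · ring
    · rintro ⟨d, t⟩ hp ⟨d', t'⟩ hp' heq
      simp only [Finset.mem_coe, Finset.mem_product] at hp hp'
      have hd : d < b := hDb d hp.1
      have hd' : d' < b := hDb d' hp'.1
      have h1 : d = d' := by
        have := congrArg (· % b) heq
        simpa [aux_mod hd, aux_mod hd'] using this
      have h2 : t = t' := by
        have := congrArg (· / b) heq
        simpa [aux_div hb0 hd, aux_div hb0 hd'] using this
      simp [h1, h2]

lemma lt_pow_iff (hb : 2 ≤ b) (hDb : ∀ d ∈ D, d < b) (h0 : 0 ∈ D)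
    {k : ℕ → ℕ} (hmono : StrictMono k) (hrange : Set.range k = intCantorSet b D)
    (i j : ℕ) : k j < b ^ i ↔ j < D.card ^ i := by
  set J : Finset ℕ := (Finset.range (b ^ i)).filter (fun j => k j < b ^ i) with hJ
  have hmemJ : ∀ j, j ∈ J ↔ k j < b ^ i := by
    intro j
    simp only [hJ, mem_filter, mem_range]
    constructor
    · exact fun h => h.2
    · intro h
      exact ⟨lt_of_le_of_lt hmono.le_apply h, h⟩
  have hclosed : ∀ j' j, j' ≤ j → j ∈ J → j' ∈ J := by
    intro j' j hle hj
    rw [hmemJ] at hj ⊢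
    exact lt_of_le_of_lt (hmono.monotone hle) hj
  have hcardJ : J.card = D.card ^ i := by
    rw [← card_cantorFinset hb hDb h0 i]
    apply Finset.card_bij (fun j _ => k j)
    · intro j hj
      rw [hmemJ] at hj
      rw [mem_cantorFinset]
      refine ⟨hj, ?_⟩
      rw [← hrange]
      exact Set.mem_range_self j
    · intro a ha a' ha' h
      exact hmono.injective h
    · intro m hm
      rw [mem_cantorFinset] at hm
      have : m ∈ Set.range k := by rw [hrange]; exact hm.2
      obtain ⟨j, rfl⟩ := this
      exact ⟨j, (hmemJ j).2 hm.1, rfl⟩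
  constructor
  · intro h
    have hj : j ∈ J := (hmemJ j).2 h
    have hsub : Finset.range (j + 1) ⊆ J := by
      intro x hx
      rw [mem_range] at hx
      exact hclosed x j (by omega) hj
    have := Finset.card_le_card hsub
    rw [Finset.card_range, hcardJ] at this
    omega
  · intro h
    by_contra hc
    have hj : j ∉ J := fun hj => hc ((hmemJ j).1 hj)
    have hsub : J ⊆ Finset.range j := by
      intro x hx
      rw [mem_range]
      by_contra hx'
      exact hj (hclosed j x (by omega) hx)
    have := Finset.card_le_card hsub
    rw [Finset.card_range, hcardJ] at this
    omega

end aux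

/-- For all `i ≥ 0`, `n ≥ 0`, and `0 ≤ j < |D|^i`,
`k_{|D|^i n + j} = b^i k_n + k_j`. -/
theorem stmt1 (b : ℕ) (D : Finset ℕ) (hb : 3 ≤ b) (hDb : ∀ d ∈ D, d < b)
    (hc2 : 2 ≤ D.card) (hcb : D.card < b) (h0 : 0 ∈ D)
    (k : ℕ → ℕ) (hmono : StrictMono k) (hrange : Set.range k = intCantorSet b D) :
    ∀ (i n j : ℕ), j < D.card ^ i →
      k (D.card ^ i * n + j) = b ^ i * k n + k j := by
  intro i n j hj
  have hb2 : 2 ≤ b := by omega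
  set δ := D.card with hδ
  have hδpos : 0 < δ ^ i := pow_pos (by omega) i
  have hltpow := lt_pow_iff hb2 hDb h0 hmono hrange i
  have hkmem : ∀ m, k m ∈ intCantorSet b D := by
    intro m
    rw [← hrange]; exact Set.mem_range_self m
  set g : ℕ → ℕ := fun m => b ^ i * k (m / δ ^ i) + k (m % δ ^ i) with hg
  have hgmono : StrictMono g := by
    intro m m' hlt
    have hq : m / δ ^ i ≤ m' / δ ^ i := Nat.div_le_div_right (le_of_lt hlt)
    have hrlt : m % δ ^ i < δ ^ i := Nat.mod_lt _ hδpos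
    have hrlt' : m' % δ ^ i < δ ^ i := Nat.mod_lt _ hδpos
    rcases eq_or_lt_of_le hq with heq | hqlt
    · have hm := Nat.div_add_mod m (δ ^ i)
      have hm' := Nat.div_add_mod m' (δ ^ i)
      have hr : m % δ ^ i < m' % δ ^ i := by
        rw [← heq] at hm'
        omega
      have hk := hmono hr
      simp only [hg, ← heq]
      omega
    · have h1 : k (m / δ ^ i) + 1 ≤ k (m' / δ ^ i) := Nat.succ_le_of_lt (hmono hqlt)
      have h2 : k (m % δ ^ i) < b ^ i := (hltpow _).2 hrlt
      simp only [hg]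
      calc b ^ i * k (m / δ ^ i) + k (m % δ ^ i)
          < b ^ i * k (m / δ ^ i) + b ^ i := by omega
        _ = b ^ i * (k (m / δ ^ i) + 1) := by ring
        _ ≤ b ^ i * k (m' / δ ^ i) := Nat.mul_le_mul_left _ h1
        _ ≤ b ^ i * k (m' / δ ^ i) + k (m' % δ ^ i) := by omega
  have hgrange : Set.range g = intCantorSet b D := by
    ext m
    constructor
    · rintro ⟨x, rfl⟩
      have hrlt : x % δ ^ i < δ ^ i := Nat.mod_lt _ hδpos
      have h2 : k (x % δ ^ i) < b ^ i := (hltpow _).2 hrlt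
      exact (split_mem hb2 h0 i _ _ h2).2 ⟨hkmem _, hkmem _⟩
    · intro hm
      have hbipos : 0 < b ^ i := pow_pos (by omega) i
      have hmod : m % b ^ i < b ^ i := Nat.mod_lt _ hbipos
      have hm2 : m = b ^ i * (m / b ^ i) + m % b ^ i := (Nat.div_add_mod m (b ^ i)).symm
      rw [hm2] at hm
      obtain ⟨hx, hy⟩ := (split_mem hb2 h0 i _ _ hmod).1 hm
      have hx' : m / b ^ i ∈ Set.range k := by rw [hrange]; exact hx
      have hy' : m % b ^ i ∈ Set.range k := by rw [hrange]; exact hy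
      obtain ⟨q, hq⟩ := hx'
      obtain ⟨r, hr⟩ := hy'
      have hrsmall : r < δ ^ i := (hltpow _).1 (by rw [hr]; exact hmod)
      refine ⟨δ ^ i * q + r, ?_⟩
      show b ^ i * k ((δ ^ i * q + r) / δ ^ i) + k ((δ ^ i * q + r) % δ ^ i) = m
      rw [aux_div hδpos hrsmall, aux_mod hrsmall, hq, hr]
      exact Nat.div_add_mod m (b ^ i)
  have hkg : k = g := (hmono.range_inj hgmono).1 (hrange.trans hgrange.symm)
  have hEq := congrFun hkg (δ ^ i * n + j)
  rw [hEq]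
  show b ^ i * k ((δ ^ i * n + j) / δ ^ i) + k ((δ ^ i * n + j) % δ ^ i) = b ^ i * k n + k j
  rw [aux_div hδpos hj, aux_mod hj]
end

section
/- Let (k_n)_{n≥0} enumerate the integer Cantor set C_{b,D} in increasing order, and let s_b(m) denote the sum of base-b digits of m. Then for all i ≥ 0, n ≥ 0, and 0 ≤ j < |D|^i, one has s_b(k_{|D|^i n + j}) = s_b(k_n) + s_b(k_j). -/
open MeasureTheory Filter Finset

/-- The canonical enumeration: write `n` in base `c`, map digits through `e`,
read the result in base `b`. -/
def cf (b c : ℕ) (e : ℕ → ℕ) (n : ℕ) : ℕ :=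
  Nat.ofDigits b ((Nat.digits c n).map e)

lemma cf_zero (b c : ℕ) (e : ℕ → ℕ) : cf b c e 0 = 0 := by
  simp [cf]

lemma cf_step (b c : ℕ) (e : ℕ → ℕ) (hc : 2 ≤ c) (he0 : e 0 = 0)
    {n t : ℕ} (ht : t < c) :
    cf b c e (c * n + t) = e t + b * cf b c e n := by
  rcases Nat.eq_zero_or_pos (c * n + t) with h | h
  · have ht0 : t = 0 := by omega
    have hn0 : n = 0 := by
      rcases Nat.eq_zero_or_pos n with h' | h'
      · exact h'
      · exfalso; nlinarith
    subst ht0; subst hn0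
    simp [cf, he0]
  · rw [cf, Nat.digits_def' (by omega : 1 < c) h]
    have h1 : (c * n + t) % c = t := by
      rw [Nat.mul_add_mod, Nat.mod_eq_of_lt ht]
    have h2 : (c * n + t) / c = n := by
      rw [Nat.mul_add_div (by omega : 0 < c), Nat.div_eq_of_lt ht]
      omega
    rw [h1, h2, List.map_cons, Nat.ofDigits_cons]
    rfl

lemma cf_eq (b c : ℕ) (e : ℕ → ℕ) (hc : 2 ≤ c) (he0 : e 0 = 0) (n : ℕ) :
    cf b c e n = e (n % c) + b * cf b c e (n / c) := by
  have hmod : n % c < c := Nat.mod_lt _ (by omega)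
  have := cf_step b c e hc he0 (n := n / c) hmod
  rwa [Nat.div_add_mod] at this

lemma cf_strictMono (b c : ℕ) (e : ℕ → ℕ) (hb : 2 ≤ b) (hc : 2 ≤ c)
    (he0 : e 0 = 0) (hemono : ∀ s t, s < t → t < c → e s < e t)
    (heb : ∀ t, t < c → e t < b) :
    StrictMono (cf b c e) := by
  have key : ∀ n m, m < n → cf b c e m < cf b c e n := by
    intro n
    induction n using Nat.strong_induction_on with
    | _ n ih =>
      intro m hmn
      have hn : 0 < n := by omega
      have hmodn : n % c < c := Nat.mod_lt _ (by omega)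
      have hmodm : m % c < c := Nat.mod_lt _ (by omega)
      have en := cf_eq b c e hc he0 n
      have em := cf_eq b c e hc he0 m
      have hdivle : m / c ≤ n / c := Nat.div_le_div_right (le_of_lt hmn)
      rcases lt_or_eq_of_le hdivle with h | h
      · have h1 : cf b c e (m / c) < cf b c e (n / c) :=
          ih (n / c) (Nat.div_lt_self hn (by omega)) (m / c) h
      -- cf m = e(m%c) + b*cf(m/c) < b + b*cf(m/c) = b*(cf(m/c)+1) ≤ b*cf(n/c) ≤ cf n
        have h2 : e (m % c) < b := heb _ hmodm
        have h3 : b * (cf b c e (m / c) + 1) ≤ b * cf b c e (n / c) :=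
          Nat.mul_le_mul_left b h1
        rw [Nat.mul_add, Nat.mul_one] at h3
        omega
      · have hmm : m % c < n % c := by
          have h4 := Nat.div_add_mod m c
          have h5 := Nat.div_add_mod n c
          rw [h] at h4
          omega
        have h6 : e (m % c) < e (n % c) := hemono _ _ hmm hmodn
        rw [h] at em
        omega
  intro m n h
  exact key n m h

lemma cf_digits (b c : ℕ) (e : ℕ → ℕ) (hb : 2 ≤ b) (hc : 2 ≤ c)
    (he0 : e 0 = 0) (heb : ∀ t, t < c → e t < b)
    {n : ℕ} (hn : 0 < cf b c e n) :
    Nat.digits b (cf b c e n) = e (n % c) :: Nat.digits b (cf b c e (n / c)) := by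
  have hmod : n % c < c := Nat.mod_lt _ (by omega)
  have heq := cf_eq b c e hc he0 n
  rw [Nat.digits_def' (by omega : 1 < b) hn]
  have h1 : cf b c e n % b = e (n % c) := by
    rw [heq, Nat.add_mul_mod_self_left, Nat.mod_eq_of_lt (heb _ hmod)]
  have h2 : cf b c e n / b = cf b c e (n / c) := by
    rw [heq, Nat.add_mul_div_left _ _ (by omega : 0 < b),
      Nat.div_eq_of_lt (heb _ hmod)]
    omega
  rw [h1, h2]

lemma cf_mem (b c : ℕ) (e : ℕ → ℕ) (hb : 2 ≤ b) (hc : 2 ≤ c)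
    (he0 : e 0 = 0) (heb : ∀ t, t < c → e t < b) :
    ∀ n, ∀ d ∈ Nat.digits b (cf b c e n), ∃ t, t < c ∧ e t = d := by
  intro n
  induction n using Nat.strong_induction_on with
  | _ n ih =>
    intro d hd
    rcases Nat.eq_zero_or_pos n with rfl | hn
    · rw [cf_zero] at hd; simp at hd
    · rcases Nat.eq_zero_or_pos (cf b c e n) with h | h
      · rw [h] at hd; simp at hd
      · rw [cf_digits b c e hb hc he0 heb h] at hd
        rcases List.mem_cons.mp hd with h' | h'
        · exact ⟨n % c, Nat.mod_lt _ (by omega), h'.symm⟩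
        · exact ih (n / c) (Nat.div_lt_self hn (by omega)) d h'

lemma cf_sum_step (b c : ℕ) (e : ℕ → ℕ) (hb : 2 ≤ b) (hc : 2 ≤ c)
    (he0 : e 0 = 0) (heb : ∀ t, t < c → e t < b) (n : ℕ) :
    (Nat.digits b (cf b c e n)).sum
      = e (n % c) + (Nat.digits b (cf b c e (n / c))).sum := by
  rcases Nat.eq_zero_or_pos (cf b c e n) with h | h
  · have heq := cf_eq b c e hc he0 n
    have h1 : e (n % c) = 0 := by omega
    have h2 : b * cf b c e (n / c) = 0 := by omega
    have h3 : cf b c e (n / c) = 0 := by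
      rcases Nat.mul_eq_zero.mp h2 with h' | h'
      · omega
      · exact h'
    rw [h, h1, h3]
    simp
  · rw [cf_digits b c e hb hc he0 heb h, List.sum_cons]

lemma cf_sum_add (b c : ℕ) (e : ℕ → ℕ) (hb : 2 ≤ b) (hc : 2 ≤ c)
    (he0 : e 0 = 0) (heb : ∀ t, t < c → e t < b) :
    ∀ i n j, j < c ^ i →
      (Nat.digits b (cf b c e (c ^ i * n + j))).sum
        = (Nat.digits b (cf b c e n)).sum + (Nat.digits b (cf b c e j)).sum := by
  intro i
  induction i with
  | zero =>
    intro n j hj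
    obtain rfl : j = 0 := by simpa using hj
    simp [cf_zero]
  | succ i ih =>
    intro n j hj
    have hq : j / c < c ^ i := by
      rw [Nat.div_lt_iff_lt_mul (by omega : 0 < c)]
      calc j < c ^ (i + 1) := hj
        _ = c ^ i * c := pow_succ c i
    have hr : j % c < c := Nat.mod_lt _ (by omega)
    have hdm := Nat.div_add_mod j c
    have hps : c ^ (i + 1) * n = c * (c ^ i * n) := by rw [pow_succ]; ring
    have hsplit : c ^ (i + 1) * n + j = c * (c ^ i * n + j / c) + j % c := by
      rw [Nat.mul_add, ← hps]
      omega
    have e1 : (c ^ (i + 1) * n + j) % c = j % c := by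
      rw [hsplit, Nat.mul_add_mod, Nat.mod_mod_of_dvd j (dvd_refl c)]
    have e2 : (c ^ (i + 1) * n + j) / c = c ^ i * n + j / c := by
      rw [hsplit, Nat.mul_add_div (by omega : 0 < c), Nat.div_eq_of_lt hr]
      omega
    have e3 : (j : ℕ) % c = j % c := rfl
    have s1 := cf_sum_step b c e hb hc he0 heb (c ^ (i + 1) * n + j)
    rw [e1, e2] at s1
    have s2 := cf_sum_step b c e hb hc he0 heb j
    have s3 := ih n (j / c) hq
    omega

lemma cf_surj (b c : ℕ) (D : Finset ℕ) (e : ℕ → ℕ) (hb : 2 ≤ b) (hc : 2 ≤ c)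
    (he0 : e 0 = 0) (hes : ∀ d ∈ D, ∃ t, t < c ∧ e t = d) :
    ∀ m ∈ intCantorSet b D, ∃ n, cf b c e n = m := by
  intro m
  induction m using Nat.strong_induction_on with
  | _ m ih =>
    intro hm
    rcases Nat.eq_zero_or_pos m with rfl | hmpos
    · exact ⟨0, cf_zero b c e⟩
    · have hd : Nat.digits b m = m % b :: Nat.digits b (m / b) :=
        Nat.digits_def' (by omega : 1 < b) hmpos
      have h1 : m % b ∈ D := hm _ (by rw [hd]; exact List.mem_cons_self)
      have h2 : m / b ∈ intCantorSet b D := by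
        intro d hdm
        exact hm d (by rw [hd]; exact List.mem_cons_of_mem _ hdm)
      obtain ⟨n', hn'⟩ := ih (m / b) (Nat.div_lt_self hmpos (by omega)) h2
      obtain ⟨t, ht, het⟩ := hes _ h1
      refine ⟨c * n' + t, ?_⟩
      rw [cf_step b c e hc he0 ht, hn', het]
      exact Nat.mod_add_div m b

/-- For all `i ≥ 0`, `n ≥ 0`, and `0 ≤ j < |D|^i`,
`s_b(k_{|D|^i n + j}) = s_b(k_n) + s_b(k_j)`, where `s_b` is the base-`b`
digit sum. -/
theorem stmt2 (b : ℕ) (D : Finset ℕ) (hb : 3 ≤ b) (hDb : ∀ d ∈ D, d < b)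
    (hc2 : 2 ≤ D.card) (hcb : D.card < b) (h0 : 0 ∈ D)
    (k : ℕ → ℕ) (hmono : StrictMono k) (hrange : Set.range k = intCantorSet b D) :
    ∀ (i n j : ℕ), j < D.card ^ i →
      (Nat.digits b (k (D.card ^ i * n + j))).sum
        = (Nat.digits b (k n)).sum + (Nat.digits b (k j)).sum := by
  set c := D.card with hc
  set l := D.sort (· ≤ ·) with hl
  set e : ℕ → ℕ := fun t => l.getD t 0 with he
  have hlen : l.length = c := Finset.length_sort _
  have hb2 : 2 ≤ b := by omega
  have hemem : ∀ t, t < c → e t ∈ D := by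
    intro t ht
    have ht' : t < l.length := by omega
    rw [he]
    simp only
    rw [List.getD_eq_getElem l 0 ht']
    exact (Finset.mem_sort _).mp (List.getElem_mem ht')
  have heb : ∀ t, t < c → e t < b := fun t ht => hDb _ (hemem t ht)
  have hsorted : l.Pairwise (· < ·) := (Finset.sortedLT_sort D).pairwise
  have hemono : ∀ s t, s < t → t < c → e s < e t := by
    intro s t hst ht
    have hs' : s < l.length := by omega
    have ht' : t < l.length := by omega
    rw [he]
    simp only
    rw [List.getD_eq_getElem l 0 hs', List.getD_eq_getElem l 0 ht']
    exact List.Pairwise.rel_get_of_lt hsorted (a := ⟨s, hs'⟩) (b := ⟨t, ht'⟩) hst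
  have he0 : e 0 = 0 := by
    have h0l : (0 : ℕ) ∈ l := (Finset.mem_sort _).mpr h0
    obtain ⟨t, ht, h0t⟩ := List.mem_iff_getElem.mp h0l
    have h0' : 0 < l.length := by omega
    rcases Nat.eq_zero_or_pos t with rfl | htp
    · rw [he]; simp only
      rw [List.getD_eq_getElem l 0 h0']
      exact h0t
    · exfalso
      have := hemono 0 t htp (by omega)
      rw [he] at this
      simp only at this
      rw [List.getD_eq_getElem l 0 ht] at this
      rw [h0t] at this
      omega
  have hes : ∀ d ∈ D, ∃ t, t < c ∧ e t = d := by
    intro d hd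
    have hdl : d ∈ l := (Finset.mem_sort _).mpr hd
    obtain ⟨t, ht, hdt⟩ := List.mem_iff_getElem.mp hdl
    refine ⟨t, by omega, ?_⟩
    rw [he]; simp only
    rw [List.getD_eq_getElem l 0 ht]
    exact hdt
  have hrange' : Set.range (cf b c e) = intCantorSet b D := by
    ext m
    constructor
    · rintro ⟨n, rfl⟩
      intro d hd
      obtain ⟨t, ht, het⟩ := cf_mem b c e hb2 hc2 he0 heb n d hd
      exact het ▸ hemem t ht
    · intro hm
      exact cf_surj b c D e hb2 hc2 he0 hes m hm
  have hkeq : k = cf b c e := by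
    have hmono' := cf_strictMono b c e hb2 hc2 he0 hemono heb
    exact (StrictMono.range_inj hmono hmono').mp (hrange.trans hrange'.symm)
  intro i n j hj
  rw [hkeq]
  exact cf_sum_add b c e hb2 hc2 he0 heb i n j hj
end

section
/- Let (k_n)_{n≥0} enumerate the integer Cantor set C_{b,D} in increasing order (0 ∈ D). Fix h ≥ 1 and k, s ∈ ℕ, and define Δ*_h(k,s) = { n ≥ 0 : k_{n+h} − k_n = k and s_b(k_{n+h}) − s_b(k_n) = s }. If Δ*_h(k,s) is nonempty then it is a (disjoint) union of arithmetic progressions, each with common difference a power of |D|. -/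
open MeasureTheory Filter Finset
set_option linter.unusedSectionVars false
set_option linter.unusedVariables false

noncomputable def gm (D : Finset ℕ) : ℕ → ℕ :=
  fun x => if hx : x < D.card then D.orderEmbOfFin rfl ⟨x, hx⟩ else 0

lemma gm_mem (D : Finset ℕ) {x : ℕ} (hx : x < D.card) : gm D x ∈ D := by
  simp [gm, hx]

lemma gm_zero (D : Finset ℕ) (h0 : 0 ∈ D) (hc : 0 < D.card) : gm D 0 = 0 := by
  have := Finset.orderEmbOfFin_zero (rfl : D.card = D.card) hc
  simp only [gm, dif_pos hc, this]
  exact Nat.le_zero.mp (Finset.min'_le D 0 h0)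

lemma gm_lt (D : Finset ℕ) {x y : ℕ} (hxy : x < y) (hy : y < D.card) :
    gm D x < gm D y := by
  have hx : x < D.card := hxy.trans hy
  simp only [gm, dif_pos hx, dif_pos hy]
  exact (D.orderEmbOfFin rfl).strictMono (by exact hxy)

lemma gm_pos (D : Finset ℕ) (h0 : 0 ∈ D) {x : ℕ} (hx0 : 0 < x) (hx : x < D.card) :
    0 < gm D x := by
  have := gm_lt D hx0 hx
  rwa [gm_zero D h0 (Nat.pos_of_ne_zero (by omega))] at this

noncomputable def fs (b : ℕ) (D : Finset ℕ) : ℕ → ℕ :=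
  fun n => Nat.ofDigits b ((Nat.digits D.card n).map (gm D))

noncomputable def sg (D : Finset ℕ) : ℕ → ℕ :=
  fun n => ((Nat.digits D.card n).map (gm D)).sum

lemma fs_zero (b : ℕ) (D : Finset ℕ) : fs b D 0 = 0 := by simp [fs]

lemma sg_zero (D : Finset ℕ) : sg D 0 = 0 := by simp [sg]

section Main
variable {b : ℕ} {D : Finset ℕ} (hb : 3 ≤ b) (hDb : ∀ d ∈ D, d < b)
  (hc2 : 2 ≤ D.card) (h0 : 0 ∈ D)

include hc2 in
lemma gm_lt_b (hDb : ∀ d ∈ D, d < b) {x : ℕ} (hx : x < D.card) : gm D x < b :=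
  hDb _ (gm_mem D hx)

include hb hDb hc2 h0 in
lemma digits_fs (n : ℕ) :
    Nat.digits b (fs b D n) = (Nat.digits D.card n).map (gm D) := by
  rcases eq_or_ne n 0 with rfl | hn
  · simp [fs]
  · apply Nat.digits_ofDigits b (by omega)
    · intro l hl
      obtain ⟨x, hx, rfl⟩ := List.mem_map.mp hl
      exact gm_lt_b hc2 hDb (Nat.digits_lt_base (by omega) hx)
    · intro hne
      have hdig : Nat.digits D.card n ≠ [] := Nat.digits_ne_nil_iff_ne_zero.mpr hn
      rw [List.getLast_map]
      have hlast := Nat.getLast_digit_ne_zero D.card hn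
      have hlt : (Nat.digits D.card n).getLast hdig < D.card :=
        Nat.digits_lt_base (by omega) (List.getLast_mem hdig)
      have := gm_pos D h0 (Nat.pos_of_ne_zero hlast) hlt
      omega

include hb hDb hc2 h0 in
lemma sum_digits_fs (n : ℕ) : (Nat.digits b (fs b D n)).sum = sg D n := by
  rw [digits_fs hb hDb hc2 h0]; rfl

include hc2 h0 in
lemma fs_step {x : ℕ} (hx : x < D.card) (m : ℕ) :
    fs b D (x + D.card * m) = gm D x + b * fs b D m := by
  rcases eq_or_ne (x + D.card * m) 0 with he | hne
  · have hm0 : m = 0 := by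
      by_contra hm
      have : D.card ≤ D.card * m := Nat.le_mul_of_pos_right _ (Nat.pos_of_ne_zero hm)
      omega
    have hx0 : x = 0 := by omega
    subst hx0; subst hm0
    simp [fs_zero, gm_zero D h0 (by omega)]
  · have h1 : 1 < D.card := by omega
    rw [fs, Nat.digits_def' h1 (Nat.pos_of_ne_zero hne)]
    have hmod : (x + D.card * m) % D.card = x := by
      rw [Nat.add_mul_mod_self_left, Nat.mod_eq_of_lt hx]
    have hdiv : (x + D.card * m) / D.card = m := by
      rw [Nat.add_mul_div_left _ _ (by omega : 0 < D.card), Nat.div_eq_of_lt hx]; omega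
    rw [hmod, hdiv, List.map_cons, Nat.ofDigits_cons]; rfl

include hc2 h0 in
lemma sg_step {x : ℕ} (hx : x < D.card) (m : ℕ) :
    sg D (x + D.card * m) = gm D x + sg D m := by
  rcases eq_or_ne (x + D.card * m) 0 with he | hne
  · have hm0 : m = 0 := by
      by_contra hm
      have : D.card ≤ D.card * m := Nat.le_mul_of_pos_right _ (Nat.pos_of_ne_zero hm)
      omega
    have hx0 : x = 0 := by omega
    subst hx0; subst hm0
    simp [sg_zero, gm_zero D h0 (by omega)]
  · rw [sg, Nat.digits_def' (by omega : 1 < D.card) (Nat.pos_of_ne_zero hne)]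
    have hmod : (x + D.card * m) % D.card = x := by
      rw [Nat.add_mul_mod_self_left, Nat.mod_eq_of_lt hx]
    have hdiv : (x + D.card * m) / D.card = m := by
      rw [Nat.add_mul_div_left _ _ (by omega : 0 < D.card), Nat.div_eq_of_lt hx]; omega
    rw [hmod, hdiv, List.map_cons, List.sum_cons]; rfl

include hc2 h0 in
lemma fs_split : ∀ t r q : ℕ, r < D.card ^ t →
    fs b D (r + D.card ^ t * q) = fs b D r + b ^ t * fs b D q := by
  intro t
  induction t with
  | zero =>
    intro r q hr
    have : r = 0 := by simpa using hr
    subst this; simp [fs_zero]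
  | succ t ih =>
    intro r q hr
    have hc0 : 0 < D.card := by omega
    have hrc : r % D.card < D.card := Nat.mod_lt _ hc0
    have hrd : r / D.card < D.card ^ t := by
      rw [Nat.div_lt_iff_lt_mul hc0]
      calc r < D.card ^ (t+1) := hr
        _ = D.card ^ t * D.card := pow_succ _ _
    have h1 : r + D.card ^ (t+1) * q
        = r % D.card + D.card * (r / D.card + D.card ^ t * q) := by
      conv_lhs => rw [← Nat.mod_add_div r D.card]
      rw [pow_succ]; ring
    have h2 : fs b D r = gm D (r % D.card) + b * fs b D (r / D.card) := by
      conv_lhs => rw [← Nat.mod_add_div r D.card]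
      exact fs_step hc2 h0 hrc _
    rw [h1, fs_step hc2 h0 hrc, ih _ _ hrd, h2, pow_succ]; ring

include hc2 h0 in
lemma sg_split : ∀ t r q : ℕ, r < D.card ^ t →
    sg D (r + D.card ^ t * q) = sg D r + sg D q := by
  intro t
  induction t with
  | zero =>
    intro r q hr
    have : r = 0 := by simpa using hr
    subst this; simp [sg_zero]
  | succ t ih =>
    intro r q hr
    have hc0 : 0 < D.card := by omega
    have hrc : r % D.card < D.card := Nat.mod_lt _ hc0
    have hrd : r / D.card < D.card ^ t := by
      rw [Nat.div_lt_iff_lt_mul hc0]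
      calc r < D.card ^ (t+1) := hr
        _ = D.card ^ t * D.card := pow_succ _ _
    have h1 : r + D.card ^ (t+1) * q
        = r % D.card + D.card * (r / D.card + D.card ^ t * q) := by
      conv_lhs => rw [← Nat.mod_add_div r D.card]
      rw [pow_succ]; ring
    have h2 : sg D r = gm D (r % D.card) + sg D (r / D.card) := by
      conv_lhs => rw [← Nat.mod_add_div r D.card]
      exact sg_step hc2 h0 hrc _
    rw [h1, sg_step hc2 h0 hrc, ih _ _ hrd, h2]; ring

include hb hDb hc2 in
lemma fs_lt_pow {n t : ℕ} (hn : n < D.card ^ t) : fs b D n < b ^ t := by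
  have hlen : (Nat.digits D.card n).length ≤ t := by
    rcases eq_or_ne n 0 with rfl | hn0
    · simp
    · rw [Nat.digits_len _ _ (by omega) hn0]
      have := Nat.log_lt_of_lt_pow hn0 hn
      omega
  have h1 : fs b D n < b ^ ((Nat.digits D.card n).map (gm D)).length := by
    apply Nat.ofDigits_lt_base_pow_length (by omega)
    intro x hx
    obtain ⟨y, hy, rfl⟩ := List.mem_map.mp hx
    exact gm_lt_b hc2 hDb (Nat.digits_lt_base (by omega) hy)
  calc fs b D n < b ^ ((Nat.digits D.card n).map (gm D)).length := h1
    _ ≤ b ^ t := Nat.pow_le_pow_right (by omega) (by simpa using hlen)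

include hb hDb hc2 h0 in
lemma fs_strictMono : StrictMono (fs b D) := by
  have key : ∀ m, ∀ n < m, fs b D n < fs b D m := by
    intro m
    induction m using Nat.strong_induction_on with
    | _ m ih =>
      intro n hn
      have hm0 : m ≠ 0 := by omega
      have hc0 : 0 < D.card := by omega
      have hnm : fs b D n = gm D (n % D.card) + b * fs b D (n / D.card) := by
        conv_lhs => rw [← Nat.mod_add_div n D.card]
        exact fs_step hc2 h0 (Nat.mod_lt _ hc0) _
      have hmm : fs b D m = gm D (m % D.card) + b * fs b D (m / D.card) := by
        conv_lhs => rw [← Nat.mod_add_div m D.card]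
        exact fs_step hc2 h0 (Nat.mod_lt _ hc0) _
      have hdiv : n / D.card ≤ m / D.card := Nat.div_le_div_right hn.le
      rcases eq_or_lt_of_le hdiv with heq | hlt
      · have hmod : n % D.card < m % D.card := by
          have h1 := Nat.mod_add_div n D.card
          have h2 := Nat.mod_add_div m D.card
          rw [heq] at h1
          omega
        have := gm_lt D hmod (Nat.mod_lt _ hc0)
        rw [hnm, hmm, heq]; omega
      · have hmlt : m / D.card < m := Nat.div_lt_self (by omega) (by omega)
        have hfd : fs b D (n / D.card) < fs b D (m / D.card) := ih _ hmlt _ hlt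
        have hg1 : gm D (n % D.card) < b := gm_lt_b hc2 hDb (Nat.mod_lt _ hc0)
        rw [hnm, hmm]
        have h3 : b * (fs b D (n / D.card) + 1) ≤ b * fs b D (m / D.card) :=
          Nat.mul_le_mul_left _ (by omega)
        have h4 : b * (fs b D (n / D.card) + 1) = b * fs b D (n / D.card) + b := by ring
        omega
  intro n m hnm; exact key m n hnm

noncomputable def ginv (D : Finset ℕ) : ℕ → ℕ :=
  fun y => if hy : y ∈ D then ((D.orderIsoOfFin rfl).symm ⟨y, hy⟩ : Fin D.card) else 0

lemma ginv_lt (D : Finset ℕ) {y : ℕ} (hy : y ∈ D) (hc : 0 < D.card) :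
    ginv D y < D.card := by
  simp only [ginv, dif_pos hy]
  exact ((D.orderIsoOfFin rfl).symm ⟨y, hy⟩).2

lemma gm_ginv (D : Finset ℕ) {y : ℕ} (hy : y ∈ D) : gm D (ginv D y) = y := by
  simp only [ginv, dif_pos hy]
  set i := (D.orderIsoOfFin (rfl : D.card = D.card)).symm ⟨y, hy⟩ with hi
  have hlt : (i : ℕ) < D.card := i.2
  simp only [gm, dif_pos hlt]
  have h2 : (⟨(i : ℕ), hlt⟩ : Fin D.card) = i := Fin.ext rfl
  rw [h2, ← Finset.coe_orderIsoOfFin_apply, OrderIso.apply_symm_apply]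

include hb hDb hc2 h0 in
lemma fs_range : Set.range (fs b D) = intCantorSet b D := by
  ext m
  constructor
  · rintro ⟨n, rfl⟩
    intro d hd
    rw [digits_fs hb hDb hc2 h0] at hd
    obtain ⟨x, hx, rfl⟩ := List.mem_map.mp hd
    exact gm_mem D (Nat.digits_lt_base (by omega) hx)
  · intro hm
    rcases eq_or_ne m 0 with rfl | hm0
    · exact ⟨0, fs_zero b D⟩
    refine ⟨Nat.ofDigits D.card ((Nat.digits b m).map (ginv D)), ?_⟩
    have hmem : ∀ d ∈ Nat.digits b m, d ∈ D := hm
    have hdig : Nat.digits D.card (Nat.ofDigits D.card ((Nat.digits b m).map (ginv D)))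
        = (Nat.digits b m).map (ginv D) := by
      apply Nat.digits_ofDigits _ (by omega)
      · intro l hl
        obtain ⟨y, hy, rfl⟩ := List.mem_map.mp hl
        exact ginv_lt D (hmem _ hy) (by omega)
      · intro hne
        rw [List.getLast_map]
        have hmnil : Nat.digits b m ≠ [] := Nat.digits_ne_nil_iff_ne_zero.mpr hm0
        have hlast := Nat.getLast_digit_ne_zero b hm0
        intro hz
        have : gm D (ginv D ((Nat.digits b m).getLast hmnil)) =
            (Nat.digits b m).getLast hmnil :=
          gm_ginv D (hmem _ (List.getLast_mem hmnil))
        rw [hz, gm_zero D h0 (by omega)] at this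
        exact hlast this.symm
    rw [fs, hdig, List.map_map]
    have : (Nat.digits b m).map (gm D ∘ ginv D) = Nat.digits b m := by
      apply List.map_congr_left ?_ |>.trans (List.map_id _)
      intro y hy
      exact gm_ginv D (hmem _ hy)
    rw [this, Nat.ofDigits_digits]

lemma strictMono_range_le {k f : ℕ → ℕ} (hk : StrictMono k) (hf : StrictMono f)
    (h : Set.range k = Set.range f) : ∀ n, (∀ m < n, k m = f m) → k n ≤ f n := by
  intro n ih
  have h2 : f n ∈ Set.range k := by rw [h]; exact Set.mem_range_self n
  obtain ⟨i, hi⟩ := h2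
  rcases lt_or_ge i n with hi' | hi'
  · exfalso
    rw [ih i hi'] at hi
    exact absurd hi (ne_of_lt (hf hi'))
  · calc k n ≤ k i := hk.monotone hi'
      _ = f n := hi

lemma strictMono_range_eq {k f : ℕ → ℕ} (hk : StrictMono k) (hf : StrictMono f)
    (h : Set.range k = Set.range f) : k = f := by
  funext n
  induction n using Nat.strong_induction_on with
  | _ n ih =>
    exact le_antisymm (strictMono_range_le hk hf h n ih)
      (strictMono_range_le hf hk h.symm n (fun m hm => (ih m hm).symm))

end Main

/-- If `Δ*_h(κ,s) = {n : k_{n+h} - k_n = κ, s_b(k_{n+h}) - s_b(k_n) = s}` is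
nonempty, then it is a disjoint union of arithmetic progressions, each with
common difference a power of `|D|`. -/
theorem stmt3 (b : ℕ) (D : Finset ℕ) (hb : 3 ≤ b) (hDb : ∀ d ∈ D, d < b)
    (hc2 : 2 ≤ D.card) (hcb : D.card < b) (h0 : 0 ∈ D)
    (k : ℕ → ℕ) (hmono : StrictMono k) (hrange : Set.range k = intCantorSet b D)
    (h : ℕ) (hh : 1 ≤ h) (κ s : ℕ)
    (hne : {n : ℕ | k (n + h) = k n + κ ∧
      (Nat.digits b (k (n + h))).sum = (Nat.digits b (k n)).sum + s}.Nonempty) :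
    ∃ (I : Set ℕ) (a : ℕ → ℕ) (e : ℕ → ℕ),
      {n : ℕ | k (n + h) = k n + κ ∧
          (Nat.digits b (k (n + h))).sum = (Nat.digits b (k n)).sum + s}
        = ⋃ i ∈ I, {n : ℕ | ∃ m : ℕ, n = a i + D.card ^ (e i) * m} ∧
      I.PairwiseDisjoint
        (fun i => {n : ℕ | ∃ m : ℕ, n = a i + D.card ^ (e i) * m}) := by
  clear hne
  classical
  have hk : k = fs b D :=
    strictMono_range_eq hmono (fs_strictMono hb hDb hc2 h0)
      (by rw [hrange, fs_range hb hDb hc2 h0])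
  subst hk
  have hc0 : 0 < D.card := by omega
  -- existence of a level t
  have hex : ∀ n : ℕ, ∃ t, n % D.card ^ t + h < D.card ^ t := by
    intro n
    refine ⟨n + h + 1, ?_⟩
    have h1 : n + h + 1 < 2 ^ (n + h + 1) := Nat.lt_two_pow_self
    have h2 : 2 ^ (n + h + 1) ≤ D.card ^ (n + h + 1) := Nat.pow_le_pow_left hc2 _
    have h3 := Nat.mod_le n (D.card ^ (n + h + 1))
    omega
  set T : ℕ → ℕ := fun n => Nat.find (hex n) with hT
  have hTspec : ∀ n, n % D.card ^ T n + h < D.card ^ T n := fun n => Nat.find_spec (hex n)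
  have hTmin : ∀ n, ∀ t < T n, ¬(n % D.card ^ t + h < D.card ^ t) :=
    fun n t ht => Nat.find_min (hex n) ht
  -- representative has the same level
  have hTrep : ∀ n, T (n % D.card ^ T n) = T n := by
    intro n
    show Nat.find (hex _) = T n
    rw [Nat.find_eq_iff]
    have hlt : n % D.card ^ T n < D.card ^ T n := Nat.mod_lt _ (pow_pos hc0 _)
    have hmm : ∀ t ≤ T n, n % D.card ^ T n % D.card ^ t = n % D.card ^ t :=
      fun t ht => Nat.mod_mod_of_dvd _ (pow_dvd_pow _ ht)
    constructor
    · rw [hmm _ le_rfl]; exact hTspec n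
    · intro t ht
      rw [hmm _ ht.le]
      exact hTmin n t ht
  -- every element of the class of a reduced representative has the same level
  have hTclass : ∀ i, i % D.card ^ T i = i → ∀ m, T (i + D.card ^ T i * m) = T i := by
    intro i hi m
    have hmod : ∀ t ≤ T i, (i + D.card ^ T i * m) % D.card ^ t = i % D.card ^ t := by
      intro t ht
      obtain ⟨w, hw⟩ := pow_dvd_pow D.card ht
      rw [hw, mul_assoc, Nat.add_mul_mod_self_left]
    show Nat.find (hex _) = T i
    rw [Nat.find_eq_iff]
    constructor
    · rw [hmod _ le_rfl, hi]
      have := hTspec i; rwa [hi] at this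
    · intro t ht
      rw [hmod _ ht.le]
      exact hTmin i t ht
  have hmodself : ∀ i m, (i + D.card ^ T i * m) % D.card ^ T i = i % D.card ^ T i :=
    fun i m => Nat.add_mul_mod_self_left _ _ _
  -- membership characterization
  have hmem : ∀ n : ℕ,
      (fs b D (n + h) = fs b D n + κ ∧
        (Nat.digits b (fs b D (n + h))).sum = (Nat.digits b (fs b D n)).sum + s)
      ↔ (fs b D (n % D.card ^ T n + h) = fs b D (n % D.card ^ T n) + κ ∧
          sg D (n % D.card ^ T n + h) = sg D (n % D.card ^ T n) + s) := by
    intro n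
    have hrh : n % D.card ^ T n + h < D.card ^ T n := hTspec n
    have hrlt : n % D.card ^ T n < D.card ^ T n := by omega
    have hn : n = n % D.card ^ T n + D.card ^ T n * (n / D.card ^ T n) :=
      (Nat.mod_add_div _ _).symm
    have hnh : n + h = (n % D.card ^ T n + h) + D.card ^ T n * (n / D.card ^ T n) := by
      omega
    have e1 : fs b D n = fs b D (n % D.card ^ T n) + b ^ T n * fs b D (n / D.card ^ T n) := by
      conv_lhs => rw [hn]
      exact fs_split hc2 h0 _ _ _ hrlt
    have e2 : fs b D (n + h)
        = fs b D (n % D.card ^ T n + h) + b ^ T n * fs b D (n / D.card ^ T n) := by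
      conv_lhs => rw [hnh]
      exact fs_split hc2 h0 _ _ _ hrh
    have e3 : (Nat.digits b (fs b D n)).sum
        = sg D (n % D.card ^ T n) + sg D (n / D.card ^ T n) := by
      rw [sum_digits_fs hb hDb hc2 h0]
      conv_lhs => rw [hn]
      exact sg_split hc2 h0 _ _ _ hrlt
    have e4 : (Nat.digits b (fs b D (n + h))).sum
        = sg D (n % D.card ^ T n + h) + sg D (n / D.card ^ T n) := by
      rw [sum_digits_fs hb hDb hc2 h0]
      conv_lhs => rw [hnh]
      exact sg_split hc2 h0 _ _ _ hrh
    rw [e3, e4, e1, e2]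
    constructor <;> rintro ⟨h1, h2⟩ <;> exact ⟨by omega, by omega⟩
  -- the index set
  refine ⟨{i : ℕ | (fs b D (i + h) = fs b D i + κ ∧
      (Nat.digits b (fs b D (i + h))).sum = (Nat.digits b (fs b D i)).sum + s) ∧
      i % D.card ^ T i = i}, id, T, ?_, ?_⟩
  · ext n
    simp only [Set.mem_setOf_eq, Set.mem_iUnion, id_eq]
    constructor
    · intro hn
      refine ⟨n % D.card ^ T n, ⟨?_, ?_⟩, n / D.card ^ T n, ?_⟩
      · -- representative is in S
        rw [hmem (n % D.card ^ T n), hTrep n,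
          Nat.mod_eq_of_lt (Nat.mod_lt _ (pow_pos hc0 _))]
        exact (hmem n).mp hn
      · rw [hTrep n]
        exact Nat.mod_eq_of_lt (Nat.mod_lt _ (pow_pos hc0 _))
      · rw [hTrep n]
        exact (Nat.mod_add_div _ _).symm
    · rintro ⟨i, ⟨hiS, hired⟩, m, rfl⟩
      have ht := hTclass i hired m
      have hm : (i + D.card ^ T i * m) % D.card ^ T (i + D.card ^ T i * m) = i := by
        rw [ht, hmodself, hired]
      rw [hmem _, hm]
      rw [hmem i, hired] at hiS
      exact hiS
  · intro i hi j hj hij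
    simp only [Set.mem_setOf_eq] at hi hj
    refine Set.disjoint_left.mpr ?_
    rintro n ⟨m1, rfl⟩ ⟨m2, hn2⟩
    simp only [id_eq] at hn2
    apply hij
    have h1 := hTclass i hi.2 m1
    have h2 : T (i + D.card ^ T i * m1) = T j := by rw [hn2]; exact hTclass j hj.2 m2
    have e1 : (i + D.card ^ T i * m1) % D.card ^ T i = i := by rw [hmodself, hi.2]
    have e2 : (i + D.card ^ T i * m1) % D.card ^ T j = j := by
      rw [hn2, hmodself, hj.2]
    rw [← e1, ← e2, h1.symm.trans h2]
end

section
/- Let (k_n)_{n≥1} enumerate the integer Cantor set C_{b,D} (with 0 ∈ D) in increasing order. Then for every irrational α, the sequence (α k_n mod 1) is equidistributed in [0,1); in particular lim_{N→∞} (1/N) Σ_{n=1}^N e^{2πi α k_n} = 0. -/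
open MeasureTheory Filter Finset

namespace Stmt5Aux

open Complex

noncomputable section

/-- The exponential `e(α m)`. -/
def W (α : ℝ) (m : ℕ) : ℂ := Complex.exp (2 * Real.pi * Complex.I * α * m)

open Classical in
/-- Elements of the integer Cantor set below `M`. -/
def S (b : ℕ) (D : Finset ℕ) (M : ℕ) : Finset ℕ :=
  (Finset.range M).filter (fun m => m ∈ intCantorSet b D)

/-- The exponential sum over Cantor elements below `M`. -/
def T (b : ℕ) (D : Finset ℕ) (α : ℝ) (M : ℕ) : ℂ := ∑ m ∈ S b D M, W α m

/-- Norm of the digit-set exponential sum. -/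
def F (D : Finset ℕ) (α : ℝ) : ℝ := ‖∑ d ∈ D, W α d‖

lemma W_eq (α : ℝ) (m : ℕ) : W α m = Complex.exp (((2 * Real.pi * α * m : ℝ) : ℂ) * Complex.I) := by
  unfold W; congr 1; push_cast; ring

lemma norm_W (α : ℝ) (m : ℕ) : ‖W α m‖ = 1 := by
  rw [W_eq, Complex.norm_exp_ofReal_mul_I]

lemma W_mul_add (α : ℝ) (b i j : ℕ) : W α (b * i + j) = W ((b : ℝ) * α) i * W α j := by
  unfold W
  rw [← Complex.exp_add]
  congr 1
  push_cast
  ring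

lemma F_nonneg (D : Finset ℕ) (α : ℝ) : 0 ≤ F D α := norm_nonneg _

lemma F_le_card (D : Finset ℕ) (α : ℝ) : F D α ≤ D.card := by
  calc F D α ≤ ∑ d ∈ D, ‖W α d‖ := norm_sum_le _ _
    _ = ∑ _d ∈ D, (1:ℝ) := Finset.sum_congr rfl fun d _ => norm_W α d
    _ = D.card := by simp

lemma mem_intCantor_iff {b : ℕ} (hb : 1 < b) {D : Finset ℕ} (h0 : (0 : ℕ) ∈ D)
    (i j : ℕ) (hj : j < b) :
    (b * i + j) ∈ intCantorSet b D ↔ (i ∈ intCantorSet b D ∧ j ∈ D) := by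
  rcases Nat.eq_zero_or_pos (b * i + j) with h | h
  · have hi : i = 0 := by
      rcases Nat.add_eq_zero.mp h with ⟨h1, _⟩
      exact (Nat.mul_eq_zero.mp h1).resolve_left (by omega)
    have hjz : j = 0 := by omega
    subst hi; subst hjz
    simp [intCantorSet, h0]
  · have hmod : (b * i + j) % b = j := by
      rw [Nat.mul_add_mod, Nat.mod_eq_of_lt hj]
    have hdiv : (b * i + j) / b = i := by
      rw [Nat.mul_add_div (by omega), Nat.div_eq_of_lt hj, add_zero]
    have hd : Nat.digits b (b * i + j) = j :: Nat.digits b i := by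
      rw [Nat.digits_def' hb h, hmod, hdiv]
    constructor
    · intro hm
      have hm' : ∀ d ∈ (j :: Nat.digits b i), d ∈ D := by rwa [← hd]
      exact ⟨fun d hdm => hm' d (List.mem_cons_of_mem _ hdm), hm' j List.mem_cons_self⟩
    · rintro ⟨hi, hjD⟩
      intro d hdm
      rw [hd] at hdm
      rcases List.mem_cons.mp hdm with rfl | hdm
      · exact hjD
      · exact hi d hdm

lemma zero_mem_intCantor (b : ℕ) (D : Finset ℕ) : 0 ∈ intCantorSet b D := by
  simp [intCantorSet]

/-- Splitting a sum over `range (b*q + r)` into base-`b` blocks. -/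
lemma sum_range_mul_add (g : ℕ → ℂ) (b q r : ℕ) :
    ∑ m ∈ Finset.range (b * q + r), g m
      = (∑ i ∈ Finset.range q, ∑ j ∈ Finset.range b, g (b * i + j))
        + ∑ j ∈ Finset.range r, g (b * q + j) := by
  rw [Finset.sum_range_add]
  congr 1
  induction q with
  | zero => simp
  | succ q ih =>
      have : b * (q + 1) = b * q + b := by ring
      rw [this, Finset.sum_range_add, ih, Finset.sum_range_succ]

open Classical in
lemma T_eq_ite (b : ℕ) (D : Finset ℕ) (α : ℝ) (M : ℕ) :
    T b D α M = ∑ m ∈ Finset.range M, if m ∈ intCantorSet b D then W α m else 0 := by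
  rw [T, S, Finset.sum_filter]

set_option maxHeartbeats 1000000 in
/-- Key recursive bound for the exponential sums. -/
lemma T_norm_bound {b : ℕ} (hb : 1 < b) {D : Finset ℕ} (h0 : (0 : ℕ) ∈ D)
    (hDb : ∀ d ∈ D, d < b) :
    ∀ n (α : ℝ) (M : ℕ), (Nat.digits b M).length ≤ n →
      ‖T b D α M‖ ≤ D.card * ∑ i ∈ Finset.range n, ∏ j ∈ Finset.range i, F D (α * b ^ j) := by
  classical
  intro n
  induction n with
  | zero =>
      intro α M hM
      have : M = 0 := by
        rw [← Nat.digits_eq_nil_iff_eq_zero (b := b)]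
        exact List.length_eq_zero_iff.mp (Nat.le_zero.mp hM)
      subst this
      simp [T, S]
  | succ n ih =>
      intro α M hM
      have hRHS_nonneg : ∀ m, (0:ℝ) ≤ ∑ i ∈ Finset.range m, ∏ j ∈ Finset.range i, F D (α * b ^ j) :=
        fun m => Finset.sum_nonneg fun i _ => Finset.prod_nonneg fun j _ => F_nonneg D _
      rcases Nat.eq_zero_or_pos M with rfl | hMpos
      · have hz : ‖T b D α 0‖ = 0 := by simp [T, S]
        rw [hz]
        exact mul_nonneg (Nat.cast_nonneg _) (hRHS_nonneg (n+1))
      -- decompose M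
      set q := M / b with hq
      set r := M % b with hr
      have hMeq : b * q + r = M := Nat.div_add_mod M b
      have hrb : r < b := Nat.mod_lt _ (by omega)
      have hdigits : Nat.digits b M = r :: Nat.digits b q := by
        rw [Nat.digits_def' hb hMpos]
      have hlenq : (Nat.digits b q).length ≤ n := by
        have := hM
        rw [hdigits] at this
        simpa using this
      -- rewrite T
      have hT : T b D α M
          = (∑ d ∈ D, W α d) * T b D ((b:ℝ) * α) q
            + ∑ j ∈ Finset.range r, (if (b * q + j) ∈ intCantorSet b D then W α (b * q + j) else 0) := by
        rw [T_eq_ite, ← hMeq, sum_range_mul_add]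
        congr 1
        have hstep : ∀ i j, j < b →
            (if (b * i + j) ∈ intCantorSet b D then W α (b * i + j) else 0)
              = (if i ∈ intCantorSet b D then W ((b:ℝ) * α) i else 0)
                * (if j ∈ D then W α j else 0) := by
          intro i j hj
          rw [mem_intCantor_iff hb h0 i j hj, W_mul_add]
          by_cases h1 : i ∈ intCantorSet b D <;> by_cases h2 : j ∈ D <;>
            simp [h1, h2]
        calc ∑ i ∈ Finset.range q, ∑ j ∈ Finset.range b,
              (if (b * i + j) ∈ intCantorSet b D then W α (b * i + j) else 0)
            = ∑ i ∈ Finset.range q, ∑ j ∈ Finset.range b,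
              ((if i ∈ intCantorSet b D then W ((b:ℝ) * α) i else 0)
                * (if j ∈ D then W α j else 0)) := by
              refine Finset.sum_congr rfl fun i _ => Finset.sum_congr rfl fun j hj => ?_
              exact hstep i j (Finset.mem_range.mp hj)
          _ = (∑ i ∈ Finset.range q, (if i ∈ intCantorSet b D then W ((b:ℝ) * α) i else 0))
                * (∑ j ∈ Finset.range b, (if j ∈ D then W α j else 0)) := by
              rw [← Finset.sum_mul_sum]
          _ = (∑ d ∈ D, W α d) * T b D ((b:ℝ) * α) q := by
              rw [mul_comm]
              congr 1
              · rw [← Finset.sum_filter]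
                congr 1
                ext j
                simp only [Finset.mem_filter, Finset.mem_range]
                exact ⟨fun h => h.2, fun h => ⟨hDb j h, h⟩⟩
              · rw [T_eq_ite]
      -- norm bound on the tail
      have htail : ‖∑ j ∈ Finset.range r,
            (if (b * q + j) ∈ intCantorSet b D then W α (b * q + j) else 0)‖ ≤ (D.card : ℝ) := by
        calc ‖∑ j ∈ Finset.range r,
              (if (b * q + j) ∈ intCantorSet b D then W α (b * q + j) else 0)‖
            ≤ ∑ j ∈ Finset.range r,
              ‖(if (b * q + j) ∈ intCantorSet b D then W α (b * q + j) else 0)‖ := norm_sum_le _ _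
          _ ≤ ∑ j ∈ Finset.range r, (if j ∈ D then (1:ℝ) else 0) := by
              refine Finset.sum_le_sum fun j hj => ?_
              have hjb : j < b := lt_of_lt_of_le (Finset.mem_range.mp hj) (le_of_lt hrb)
              by_cases hmem : (b * q + j) ∈ intCantorSet b D
              · have hjD : j ∈ D := ((mem_intCantor_iff hb h0 q j hjb).mp hmem).2
                rw [if_pos hmem, if_pos hjD, norm_W]
              · simp only [hmem, if_false, norm_zero]
                by_cases hjD : j ∈ D <;> simp [hjD]
          _ = ((Finset.range r).filter (fun j => j ∈ D)).card := by
              rw [← Finset.sum_filter]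
              simp
          _ ≤ (D.card : ℝ) := by
              have : ((Finset.range r).filter (fun j => j ∈ D)) ⊆ D := fun j hj =>
                (Finset.mem_filter.mp hj).2
              exact_mod_cast Finset.card_le_card this
      -- combine
      have hmain : ‖T b D α M‖ ≤ F D α * ‖T b D ((b:ℝ) * α) q‖ + D.card := by
        rw [hT]
        refine le_trans (norm_add_le _ _) ?_
        rw [norm_mul]
        exact add_le_add le_rfl htail
      have hrec := ih ((b:ℝ) * α) q hlenq
      have hrec' : ‖T b D ((b:ℝ) * α) q‖
          ≤ D.card * ∑ i ∈ Finset.range n, ∏ j ∈ Finset.range i, F D (α * b ^ (j+1)) := by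
        refine hrec.trans (le_of_eq ?_)
        congr 1
        refine Finset.sum_congr rfl fun i _ => Finset.prod_congr rfl fun j _ => ?_
        congr 1
        ring
      set A := ∑ i ∈ Finset.range n, ∏ j ∈ Finset.range i, F D (α * b ^ (j+1)) with hA
      have hRHSeq : ∑ i ∈ Finset.range (n+1), ∏ j ∈ Finset.range i, F D (α * b ^ j)
          = F D α * A + 1 := by
        rw [Finset.sum_range_succ']
        simp only [Finset.range_zero, Finset.prod_empty]
        rw [hA, Finset.mul_sum]
        congr 1
        refine Finset.sum_congr rfl fun i _ => ?_
        rw [Finset.prod_range_succ']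
        rw [pow_zero, mul_one, mul_comm]
      calc ‖T b D α M‖ ≤ F D α * ‖T b D ((b:ℝ) * α) q‖ + D.card := hmain
        _ ≤ F D α * (D.card * A) + D.card := by
            have h := mul_le_mul_of_nonneg_left hrec' (F_nonneg D α)
            linarith
        _ = D.card * (F D α * A + 1) := by ring
        _ = D.card * ∑ i ∈ Finset.range (n+1), ∏ j ∈ Finset.range i, F D (α * b ^ j) := by
            rw [hRHSeq]

/-- Lower bound on the number of Cantor elements below `M`. -/
lemma card_S_lower {b : ℕ} (hb : 1 < b) {D : Finset ℕ} (h0 : (0 : ℕ) ∈ D)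
    (hDb : ∀ d ∈ D, d < b) :
    ∀ M : ℕ, 1 ≤ M → D.card ^ ((Nat.digits b M).length - 1) ≤ (S b D M).card := by
  classical
  intro M
  induction M using Nat.strong_induction_on with
  | _ M ih =>
    intro hM1
    rcases lt_or_ge M b with hMb | hbM
    · -- single digit: length = 1
      have hlen : (Nat.digits b M).length ≤ 1 := by
        by_contra h
        push_neg at h
        have h2 : (2:ℕ) ≤ (Nat.digits b M).length := h
        have : b ^ (Nat.digits b M).length ≤ b * M :=
          Nat.base_pow_length_digits_le b M hb (by omega)
        have hbx : b ^ 2 ≤ b ^ (Nat.digits b M).length := Nat.pow_le_pow_right (by omega) h2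
        nlinarith
      have : (Nat.digits b M).length - 1 = 0 := by omega
      rw [this, pow_zero]
      have h0S : (0 : ℕ) ∈ S b D M := by
        unfold S
        simp only [Finset.mem_filter, Finset.mem_range]
        exact ⟨by omega, zero_mem_intCantor b D⟩
      exact Finset.card_pos.mpr ⟨0, h0S⟩
    · -- M ≥ b
      set q := M / b with hq
      have hq1 : 1 ≤ q := Nat.one_le_div_iff (by omega) |>.mpr hbM
      have hqM : q < M := Nat.div_lt_self (by omega) hb
      have hMpos : 0 < M := by omega
      have hdigits : Nat.digits b M = (M % b) :: Nat.digits b q := Nat.digits_def' hb hMpos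
      have hlenq1 : 1 ≤ (Nat.digits b q).length := by
        have : Nat.digits b q ≠ [] := Nat.digits_ne_nil_iff_ne_zero.mpr (by omega)
        exact List.length_pos_iff.mpr this
      have hlen : (Nat.digits b M).length - 1 = (Nat.digits b q).length := by
        rw [hdigits]; simp
      rw [hlen]
      have hih := ih q hqM hq1
      -- injection (i, d) ↦ b*i + d from S q ×ˢ D into S M
      have hinj : ((S b D q) ×ˢ D).card ≤ (S b D M).card := by
        refine Finset.card_le_card_of_injOn (fun p => b * p.1 + p.2) ?_ ?_
        · rintro ⟨i, d⟩ hp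
          simp only [Finset.coe_product, Set.mem_prod, Finset.mem_coe] at hp ⊢
          obtain ⟨hiS, hdD⟩ := hp
          unfold S at hiS ⊢
          rw [Finset.mem_filter, Finset.mem_range] at hiS
          rw [Finset.mem_filter, Finset.mem_range]
          have hdb : d < b := hDb d hdD
          constructor
          · show b * i + d < M
            have hiq : i + 1 ≤ q := hiS.1
            have h1 : b * i + d < b * (i + 1) := by rw [Nat.mul_succ]; omega
            have h2 : b * (i+1) ≤ b * q := Nat.mul_le_mul_left b hiq
            have h3 : b * q ≤ M := by
              rw [mul_comm, hq]
              exact Nat.div_mul_le_self M b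
            omega
          · exact (mem_intCantor_iff hb h0 i d hdb).mpr ⟨hiS.2, hdD⟩
        · rintro ⟨i, d⟩ hp ⟨i', d'⟩ hp' heq
          simp only [Finset.coe_product, Set.mem_prod, Finset.mem_coe] at hp hp'
          have hdb : d < b := hDb d hp.2
          have hdb' : d' < b := hDb d' hp'.2
          simp only at heq
          have hdivd : ∀ x y : ℕ, y < b → (b * x + y) / b = x := by
            intro x y hy
            rw [Nat.mul_add_div (by omega), Nat.div_eq_of_lt hy, add_zero]
          have hi : i = i' := by
            have e1 := hdivd i d hdb
            have e2 := hdivd i' d' hdb'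
            rw [heq] at e1
            omega
          subst hi
          have : d = d' := by omega
          simp_all
      have hcard : ((S b D q) ×ˢ D).card = (S b D q).card * D.card := Finset.card_product _ _
      calc D.card ^ (Nat.digits b q).length
          = D.card ^ ((Nat.digits b q).length - 1) * D.card := by
            rw [← pow_succ]
            congr 1
            omega
        _ ≤ (S b D q).card * D.card := Nat.mul_le_mul_right _ hih
        _ = ((S b D q) ×ˢ D).card := hcard.symm
        _ ≤ (S b D M).card := hinj

/-- Irrational rotations by powers of `b` are infinitely often far from the integers. -/
lemma freq_far_from_int {θ : ℝ} (hθ : Irrational θ) {b : ℕ} (hb : 1 < b) :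
    ∀ J : ℕ, ∃ j, J ≤ j ∧ 1 / (2 * ((b:ℝ) + 1)) ≤ |θ * b ^ j - round (θ * b ^ j)| := by
  intro J
  by_contra hcon
  push_neg at hcon
  set ε : ℝ := 1 / (2 * ((b:ℝ) + 1)) with hε
  have hb1 : (1:ℝ) < b := by exact_mod_cast hb
  have hεpos : 0 < ε := by positivity
  have hnear : ∀ t : ℕ, |θ * b ^ (J + t) - round (θ * b ^ (J + t))| < ε := by
    intro t
    exact hcon (J + t) (Nat.le_add_right _ _)
  set m : ℕ → ℤ := fun t => round (θ * b ^ (J + t)) with hm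
  have hstep : ∀ t, m (t + 1) = b * m t := by
    intro t
    have h1 := hnear t
    have h2 := hnear (t + 1)
    have hkey : |((b * m t - m (t + 1) : ℤ) : ℝ)| < 1 := by
      have hexp : ((b * m t - m (t + 1) : ℤ) : ℝ)
          = (b:ℝ) * ((m t : ℝ) - θ * b ^ (J + t)) + (θ * b ^ (J + t + 1) - (m (t+1) : ℝ)) := by
        push_cast [pow_succ]
        ring
      rw [hexp]
      calc |(b:ℝ) * ((m t : ℝ) - θ * b ^ (J + t)) + (θ * b ^ (J + t + 1) - (m (t+1) : ℝ))|
          ≤ |(b:ℝ)| * |(m t : ℝ) - θ * b ^ (J + t)| + |θ * b ^ (J + t + 1) - (m (t+1) : ℝ)| := by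
            refine le_trans (abs_add_le _ _) ?_
            rw [abs_mul]
        _ < (b:ℝ) * ε + ε := by
            have hb0 : |(b:ℝ)| = (b:ℝ) := abs_of_nonneg (by positivity)
            rw [hb0]
            have e1 : |(m t : ℝ) - θ * b ^ (J + t)| < ε := by rwa [abs_sub_comm]
            have e2 : |θ * b ^ (J + t + 1) - (m (t+1) : ℝ)| < ε := h2
            have hbpos : (0:ℝ) < b := by linarith
            nlinarith
        _ ≤ 1 := by
            have hpos : (0:ℝ) < (b:ℝ) + 1 := by linarith
            have heq2 : (b:ℝ) * ε + ε = 1/2 := by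
              rw [hε]
              field_simp
            linarith
    have hz : (b * m t - m (t + 1) : ℤ) = 0 := by
      have h' : |(b * m t - m (t + 1) : ℤ)| < 1 := by
        rw [← Int.cast_abs] at hkey
        exact_mod_cast hkey
      have h'' := abs_lt.mp h'
      omega
    omega
  have hpow : ∀ t, m t = b ^ t * m 0 := by
    intro t
    induction t with
    | zero => simp
    | succ t ih => rw [hstep t, ih]; ring
  have hclose : ∀ t : ℕ, |θ * b ^ J - (m 0 : ℝ)| * (b:ℝ) ^ t < ε := by
    intro t
    have := hnear t
    have hexp : θ * b ^ (J + t) - (m t : ℝ) = (θ * b ^ J - (m 0 : ℝ)) * (b:ℝ) ^ t := by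
      rw [hpow t]
      push_cast
      rw [pow_add]
      ring
    rw [hexp] at this
    rwa [abs_mul, _root_.abs_of_nonneg (by positivity : (0:ℝ) ≤ (b:ℝ) ^ t)] at this
  have heq : θ * b ^ J = (m 0 : ℝ) := by
    by_contra hne
    have hδ : 0 < |θ * b ^ J - (m 0 : ℝ)| := abs_pos.mpr (sub_ne_zero.mpr hne)
    obtain ⟨t, ht⟩ := pow_unbounded_of_one_lt (ε / |θ * b ^ J - (m 0 : ℝ)|) hb1
    have := hclose t
    rw [div_lt_iff₀ hδ] at ht
    nlinarith
  have hirr : Irrational (θ * b ^ J) := by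
    have : Irrational (θ * ((b ^ J : ℕ) : ℝ)) := hθ.mul_natCast (by positivity)
    push_cast at this
    exact this
  exact hirr.ne_int (m 0) heq

lemma norm_sq_one_add_exp (x : ℝ) :
    ‖1 + Complex.exp (((x:ℝ):ℂ) * Complex.I)‖ ^ 2 = 2 + 2 * Real.cos x := by
  rw [Complex.exp_mul_I]
  rw [Complex.sq_norm, Complex.normSq_apply]
  simp only [Complex.add_re, Complex.add_im, Complex.one_re, Complex.one_im,
    Complex.cos_ofReal_re, Complex.cos_ofReal_im, Complex.mul_re, Complex.mul_im,
    Complex.sin_ofReal_re, Complex.sin_ofReal_im, Complex.I_re, Complex.I_im]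
  ring_nf
  nlinarith [Real.sin_sq_add_cos_sq x]

lemma cos_le_of_far {x ε : ℝ} (hε0 : 0 < ε) (hε : ε ≤ 1/2)
    (hfar : ε ≤ |x - round x|) :
    Real.cos (2 * Real.pi * x) ≤ Real.cos (2 * Real.pi * ε) := by
  set y := x - (round x : ℝ) with hy
  have hy2 : |y| ≤ 1/2 := abs_sub_round x
  have habs : Real.cos (2 * Real.pi * |y|) = Real.cos (2 * Real.pi * y) := by
    rcases abs_choice y with h | h
    · rw [h]
    · rw [h, show 2 * Real.pi * -y = -(2 * Real.pi * y) by ring, Real.cos_neg]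
  have hcos : Real.cos (2 * Real.pi * x) = Real.cos (2 * Real.pi * |y|) := by
    rw [habs]
    have hxy : 2 * Real.pi * x = 2 * Real.pi * y + (round x : ℤ) * (2 * Real.pi) := by
      rw [hy]; push_cast; ring
    rw [hxy, Real.cos_add_int_mul_two_pi]
  rw [hcos]
  have hpi := Real.pi_pos
  have hylepi : 2 * Real.pi * |y| ≤ Real.pi := by
    calc 2 * Real.pi * |y| ≤ 2 * Real.pi * (1/2) := by
          have : (0:ℝ) ≤ 2 * Real.pi := by positivity
          nlinarith [abs_nonneg y]
      _ = Real.pi := by ring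
  rcases eq_or_lt_of_le hfar with h | h
  · rw [← h]
  · exact le_of_lt (Real.cos_lt_cos_of_nonneg_of_le_pi (by positivity) hylepi (by nlinarith))


lemma norm_one_add_exp_le {x ε : ℝ} (hε0 : 0 < ε) (hε : ε ≤ 1/2)
    (hfar : ε ≤ |x - round x|) :
    ‖1 + Complex.exp (((2 * Real.pi * x : ℝ) : ℂ) * Complex.I)‖
      ≤ Real.sqrt (2 + 2 * Real.cos (2 * Real.pi * ε)) := by
  have h1 := norm_sq_one_add_exp (2 * Real.pi * x)
  have h2 := cos_le_of_far hε0 hε hfar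
  rw [Real.le_sqrt (norm_nonneg _)
    (by nlinarith [Real.neg_one_le_cos (2 * Real.pi * ε)])]
  rw [h1]
  linarith

lemma F_le_of_far {D : Finset ℕ} {d₀ : ℕ} (hd₀ : d₀ ∈ D) (hd₀0 : d₀ ≠ 0) (h0 : (0:ℕ) ∈ D)
    {β ε : ℝ} (hε0 : 0 < ε) (hε12 : ε ≤ 1/2)
    (hfar : ε ≤ |β * d₀ - round (β * d₀)|) :
    F D β ≤ Real.sqrt (2 + 2 * Real.cos (2 * Real.pi * ε)) + ((D.card : ℝ) - 2) := by
  classical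
  set s : Finset ℕ := {0, d₀} with hs
  have hsub : s ⊆ D := by
    intro x hx
    simp only [hs, Finset.mem_insert, Finset.mem_singleton] at hx
    rcases hx with rfl | rfl
    · exact h0
    · exact hd₀
  have h0d : (0:ℕ) ≠ d₀ := fun h => hd₀0 h.symm
  have hcards : s.card = 2 := by
    rw [hs, Finset.card_insert_of_notMem (by simpa using h0d), Finset.card_singleton]
  have hcD : 2 ≤ D.card := hcards ▸ Finset.card_le_card hsub
  have hsplit : ∑ d ∈ D, W β d = (∑ d ∈ D \ s, W β d) + ∑ d ∈ s, W β d :=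
    (Finset.sum_sdiff hsub).symm
  have hpair : ∑ d ∈ s, W β d
      = 1 + Complex.exp (((2 * Real.pi * (β * d₀) : ℝ) : ℂ) * Complex.I) := by
    rw [hs, Finset.sum_pair h0d]
    have hW0 : W β 0 = 1 := by simp [W]
    rw [hW0]
    congr 1
    rw [W_eq]
    congr 2
    push_cast
    ring
  have hfirst : ‖∑ d ∈ D \ s, W β d‖ ≤ ((D.card : ℝ) - 2) := by
    calc ‖∑ d ∈ D \ s, W β d‖ ≤ ∑ d ∈ D \ s, ‖W β d‖ := norm_sum_le _ _
      _ = ∑ _d ∈ D \ s, (1:ℝ) := Finset.sum_congr rfl fun d _ => norm_W β d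
      _ = ((D \ s).card : ℝ) := by simp
      _ = ((D.card : ℝ) - 2) := by
          rw [Finset.card_sdiff_of_subset hsub, hcards]
          push_cast [Nat.cast_sub hcD]
          ring
  calc F D β = ‖(∑ d ∈ D \ s, W β d) + ∑ d ∈ s, W β d‖ := by rw [F, hsplit]
    _ ≤ ‖∑ d ∈ D \ s, W β d‖ + ‖∑ d ∈ s, W β d‖ := norm_add_le _ _
    _ ≤ ((D.card : ℝ) - 2) + Real.sqrt (2 + 2 * Real.cos (2 * Real.pi * ε)) := by
        refine add_le_add hfirst ?_
        rw [hpair]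
        exact norm_one_add_exp_le hε0 hε12 hfar
    _ = Real.sqrt (2 + 2 * Real.cos (2 * Real.pi * ε)) + ((D.card : ℝ) - 2) := by ring

lemma prod_tendsto_zero {f : ℕ → ℝ} (hf0 : ∀ j, 0 ≤ f j) (hf1 : ∀ j, f j ≤ 1)
    {ρ : ℝ} (hρ0 : 0 ≤ ρ) (hρ1 : ρ < 1) (hf : ∀ J, ∃ j, J ≤ j ∧ f j ≤ ρ) :
    Filter.Tendsto (fun n => ∏ j ∈ Finset.range n, f j) Filter.atTop (nhds 0) := by
  have hnnP : ∀ n, (0:ℝ) ≤ ∏ j ∈ Finset.range n, f j :=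
    fun n => Finset.prod_nonneg fun i _ => hf0 i
  have hmono : ∀ m n, m ≤ n →
      (∏ j ∈ Finset.range n, f j) ≤ ∏ j ∈ Finset.range m, f j := by
    intro m n hmn
    rw [← Finset.prod_range_mul_prod_Ico f hmn]
    have hle1 : ∏ j ∈ Finset.Ico m n, f j ≤ 1 :=
      Finset.prod_le_one (fun i _ => hf0 i) (fun i _ => hf1 i)
    have h2 : (0:ℝ) ≤ ∏ j ∈ Finset.Ico m n, f j :=
      Finset.prod_nonneg fun i _ => hf0 i
    nlinarith [hnnP m]
  have hsmall : ∀ k : ℕ, ∃ N, (∏ j ∈ Finset.range N, f j) ≤ ρ ^ k := by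
    intro k
    induction k with
    | zero => exact ⟨0, by simp⟩
    | succ k ihk =>
        obtain ⟨N, hN⟩ := ihk
        obtain ⟨j, hjN, hjρ⟩ := hf N
        refine ⟨j + 1, ?_⟩
        rw [← Finset.prod_range_mul_prod_Ico f (Nat.le_succ_of_le hjN)]
        have hIco : ∏ i ∈ Finset.Ico N (j+1), f i ≤ ρ := by
          rw [Finset.prod_Ico_succ_top hjN]
          have h1' : ∏ i ∈ Finset.Ico N j, f i ≤ 1 :=
            Finset.prod_le_one (fun i _ => hf0 i) (fun i _ => hf1 i)
          have h2' : (0:ℝ) ≤ ∏ i ∈ Finset.Ico N j, f i :=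
            Finset.prod_nonneg fun i _ => hf0 i
          nlinarith [hf0 j]
        have hIco0 : (0:ℝ) ≤ ∏ i ∈ Finset.Ico N (j+1), f i :=
          Finset.prod_nonneg fun i _ => hf0 i
        calc (∏ i ∈ Finset.range N, f i) * ∏ i ∈ Finset.Ico N (j+1), f i
            ≤ ρ ^ k * ρ := mul_le_mul hN hIco hIco0 (pow_nonneg hρ0 k)
          _ = ρ ^ (k + 1) := (pow_succ ρ k).symm
  rw [Metric.tendsto_atTop]
  intro δ hδ
  obtain ⟨k, hk⟩ := exists_pow_lt_of_lt_one hδ hρ1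
  obtain ⟨N, hN⟩ := hsmall k
  refine ⟨N, fun n hn => ?_⟩
  rw [dist_zero_right, Real.norm_eq_abs, _root_.abs_of_nonneg (hnnP n)]
  have := hmono N n hn
  linarith

lemma cesaro_bound {c : ℝ} (hc : 2 ≤ c) {Q : ℕ → ℝ} (hQ0 : ∀ n, 0 ≤ Q n)
    (h : Filter.Tendsto (fun n => Q n / c ^ n) Filter.atTop (nhds 0)) :
    Filter.Tendsto (fun n => (∑ i ∈ Finset.range n, Q i) / c ^ n)
      Filter.atTop (nhds 0) := by
  have hc0 : (0:ℝ) < c := by linarith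
  have hc1 : (1:ℝ) < c := by linarith
  rw [Metric.tendsto_atTop] at h ⊢
  intro δ hδ
  obtain ⟨I, hI⟩ := h (δ/4) (by linarith)
  set C := ∑ i ∈ Finset.range I, Q i with hC
  have hCn : 0 ≤ C := Finset.sum_nonneg fun i _ => hQ0 i
  have hQle : ∀ i, I ≤ i → Q i ≤ (δ/4) * c ^ i := by
    intro i hi
    have h' := hI i hi
    have hcin : (0:ℝ) < c ^ i := pow_pos hc0 i
    rw [dist_zero_right, Real.norm_eq_abs,
      _root_.abs_of_nonneg (div_nonneg (hQ0 i) hcin.le), div_lt_iff₀ hcin] at h'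
    linarith
  obtain ⟨N₀, hN₀⟩ : ∃ N₀ : ℕ, C / (δ/2) < c ^ N₀ := pow_unbounded_of_one_lt _ hc1
  refine ⟨max I N₀, fun n hn => ?_⟩
  have hnI : I ≤ n := le_trans (le_max_left _ _) hn
  have hnN : N₀ ≤ n := le_trans (le_max_right _ _) hn
  have hcn : (0:ℝ) < c ^ n := pow_pos hc0 n
  have hsum : ∑ i ∈ Finset.range n, Q i ≤ C + (δ/4) * (∑ i ∈ Finset.range n, c ^ i) := by
    rw [← Finset.sum_range_add_sum_Ico Q hnI]
    have hmid : ∑ i ∈ Finset.Ico I n, Q i ≤ (δ/4) * ∑ i ∈ Finset.Ico I n, c ^ i := by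
      rw [Finset.mul_sum]
      exact Finset.sum_le_sum fun i hi => hQle i (Finset.mem_Ico.mp hi).1
    have hsub : ∑ i ∈ Finset.Ico I n, c ^ i ≤ ∑ i ∈ Finset.range n, c ^ i := by
      refine Finset.sum_le_sum_of_subset_of_nonneg ?_ fun i _ _ => (pow_pos hc0 i).le
      intro i hi
      rw [Finset.mem_range]
      exact (Finset.mem_Ico.mp hi).2
    have hδ4 : (0:ℝ) ≤ δ/4 := by linarith
    nlinarith
  have hgeom : ∑ i ∈ Finset.range n, c ^ i ≤ 2 * c ^ n := by
    rw [geom_sum_eq (ne_of_gt hc1), div_le_iff₀ (by linarith)]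
    nlinarith [pow_pos hc0 n]
  have h3 : C < δ/2 * c ^ n := by
    have h2' : C / (δ/2) < c ^ n :=
      lt_of_lt_of_le hN₀ (pow_le_pow_right₀ (le_of_lt hc1) hnN)
    rw [div_lt_iff₀ (by linarith)] at h2'
    linarith
  have h4 : ∑ i ∈ Finset.range n, Q i ≤ C + (δ/2) * c ^ n := by
    have := mul_le_mul_of_nonneg_left hgeom (by linarith : (0:ℝ) ≤ δ/4)
    linarith
  have hfin : (∑ i ∈ Finset.range n, Q i) / c ^ n < δ := by
    rw [div_lt_iff₀ hcn]
    linarith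
  rw [dist_zero_right, Real.norm_eq_abs,
    _root_.abs_of_nonneg (div_nonneg (Finset.sum_nonneg fun i _ => hQ0 i) hcn.le)]
  exact hfin

end

end Stmt5Aux

/-- For every irrational `α`, the sequence `(α k_n)` is equidistributed mod 1:
all the nonzero-frequency Weyl sums tend to `0`. -/
theorem stmt5 (b : ℕ) (D : Finset ℕ) (hb : 3 ≤ b) (hDb : ∀ d ∈ D, d < b)
    (hc2 : 2 ≤ D.card) (hcb : D.card < b) (h0 : 0 ∈ D)
    (k : ℕ → ℕ) (hmono : StrictMono k) (hrange : Set.range k = intCantorSet b D)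
    (α : ℝ) (hα : Irrational α) :
    Tendsto (fun N : ℕ => (N : ℂ)⁻¹ *
        ∑ n ∈ Finset.range N,
          Complex.exp (2 * Real.pi * Complex.I * α * (k n : ℂ)))
      atTop (nhds 0) := by
  classical
  open Stmt5Aux in
  have hb1 : 1 < b := by omega
  obtain ⟨d₀, hd₀D, hd₀0⟩ := Finset.exists_mem_ne (by omega : 1 < D.card) 0
  have hθ : Irrational (α * d₀) := hα.mul_natCast hd₀0
  set ε : ℝ := 1 / (2 * ((b:ℝ) + 1)) with hε
  have hbR : (0:ℝ) ≤ b := Nat.cast_nonneg b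
  have hε0 : 0 < ε := by rw [hε]; positivity
  have hε12 : ε ≤ 1/2 := by
    rw [hε, div_le_div_iff₀ (by linarith) (by norm_num)]
    linarith
  set ρ : ℝ := Real.sqrt (2 + 2 * Real.cos (2 * Real.pi * ε)) + ((D.card : ℝ) - 2) with hρ
  have hcR : (2:ℝ) ≤ (D.card : ℝ) := by exact_mod_cast hc2
  have hcpos : (0:ℝ) < (D.card : ℝ) := by linarith
  have hpi := Real.pi_pos
  have hsqrtlt : Real.sqrt (2 + 2 * Real.cos (2 * Real.pi * ε)) < 2 := by
    rw [Real.sqrt_lt' (by norm_num : (0:ℝ) < 2)]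
    have hcos1 : Real.cos (2 * Real.pi * ε) < 1 := by
      have h' := Real.cos_lt_cos_of_nonneg_of_le_pi (le_refl 0)
        (by nlinarith : 2 * Real.pi * ε ≤ Real.pi) (by positivity : (0:ℝ) < 2 * Real.pi * ε)
      simpa [Real.cos_zero] using h'
    nlinarith
  have hρc : ρ < (D.card : ℝ) := by rw [hρ]; linarith
  have hρ0 : 0 ≤ ρ := by
    have := Real.sqrt_nonneg (2 + 2 * Real.cos (2 * Real.pi * ε))
    rw [hρ]; linarith
  have hfreq : ∀ J : ℕ, ∃ j, J ≤ j ∧ Stmt5Aux.F D (α * b ^ j) ≤ ρ := by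
    intro J
    obtain ⟨j, hjJ, hfar⟩ := Stmt5Aux.freq_far_from_int hθ hb1 J
    refine ⟨j, hjJ, ?_⟩
    have hfar' : ε ≤ |(α * b ^ j) * d₀ - round ((α * b ^ j) * d₀)| := by
      have hcomm : (α * (b:ℝ) ^ j) * (d₀ : ℝ) = (α * d₀) * (b:ℝ) ^ j := by ring
      rw [hcomm, hε]
      exact hfar
    have hle := Stmt5Aux.F_le_of_far hd₀D hd₀0 h0 hε0 hε12 hfar'
    rw [hρ]
    exact hle
  -- the normalized partial products tend to zero
  set f : ℕ → ℝ := fun j => Stmt5Aux.F D (α * b ^ j) / D.card with hfdef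
  have hprod : Tendsto (fun n => ∏ j ∈ Finset.range n, f j) atTop (nhds 0) := by
    refine Stmt5Aux.prod_tendsto_zero
      (fun j => div_nonneg (Stmt5Aux.F_nonneg D _) hcpos.le)
      (fun j => div_le_one_of_le₀ (Stmt5Aux.F_le_card D _) hcpos.le)
      (ρ := ρ / D.card) (div_nonneg hρ0 hcpos.le) ((div_lt_one hcpos).mpr hρc)
      (fun J => ?_)
    obtain ⟨j, h1, h2⟩ := hfreq J
    refine ⟨j, h1, ?_⟩
    show Stmt5Aux.F D (α * b ^ j) / (D.card : ℝ) ≤ ρ / (D.card : ℝ)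
    gcongr
  have hQf : ∀ n, (∏ j ∈ Finset.range n, Stmt5Aux.F D (α * b ^ j)) / (D.card : ℝ) ^ n
      = ∏ j ∈ Finset.range n, f j := by
    intro n
    rw [hfdef, Finset.prod_div_distrib, Finset.prod_const, Finset.card_range]
  have hQtend : Tendsto
      (fun n => (∏ j ∈ Finset.range n, Stmt5Aux.F D (α * b ^ j)) / (D.card : ℝ) ^ n)
      atTop (nhds 0) := by
    have : (fun n => (∏ j ∈ Finset.range n, Stmt5Aux.F D (α * b ^ j)) / (D.card : ℝ) ^ n)
        = fun n => ∏ j ∈ Finset.range n, f j := funext hQf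
    rw [this]
    exact hprod
  have hces := Stmt5Aux.cesaro_bound hcR
    (fun n => Finset.prod_nonneg fun j _ => Stmt5Aux.F_nonneg D _) hQtend
  have hA : Tendsto (fun n => (D.card : ℝ) ^ 2 *
      ((∑ i ∈ Finset.range n, ∏ j ∈ Finset.range i, Stmt5Aux.F D (α * b ^ j))
        / (D.card : ℝ) ^ n)) atTop (nhds 0) := by
    simpa using hces.const_mul ((D.card : ℝ) ^ 2)
  have hL : Tendsto (fun N => (Nat.digits b (k N)).length) atTop atTop := by
    rw [Filter.tendsto_atTop]
    intro n
    rw [Filter.eventually_atTop]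
    refine ⟨b ^ n, fun N hN => ?_⟩
    have h1 : b ^ n ≤ k N := le_trans hN hmono.le_apply
    have h2 : (Nat.digits b (b ^ n)).length ≤ (Nat.digits b (k N)).length :=
      Nat.le_digits_len_le _ _ _ h1
    have h3 : (Nat.digits b (b ^ n)).length = n + 1 := by
      rw [Nat.digits_len _ _ hb1 (by positivity), Nat.log_pow hb1]
    omega
  have hcomp : Tendsto (fun N : ℕ => (D.card : ℝ) ^ 2 *
      ((∑ i ∈ Finset.range ((Nat.digits b (k N)).length),
          ∏ j ∈ Finset.range i, Stmt5Aux.F D (α * b ^ j))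
        / (D.card : ℝ) ^ ((Nat.digits b (k N)).length))) atTop (nhds 0) := hA.comp hL
  rw [tendsto_zero_iff_norm_tendsto_zero]
  refine squeeze_zero' (Filter.Eventually.of_forall fun N => norm_nonneg _) ?_ hcomp
  rw [Filter.eventually_atTop]
  refine ⟨1, fun N hN1 => ?_⟩
  -- notation
  set M := k N with hM
  set L := (Nat.digits b M).length with hLdef
  set P := ∑ i ∈ Finset.range L, ∏ j ∈ Finset.range i, Stmt5Aux.F D (α * b ^ j) with hP
  have hMpos : 1 ≤ M := le_trans hN1 hmono.le_apply
  have hLpos : 1 ≤ L := by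
    rw [hLdef]
    exact List.length_pos_iff.mpr (Nat.digits_ne_nil_iff_ne_zero.mpr (by omega))
  -- identify the sum with T
  have hSim : Stmt5Aux.S b D M = (Finset.range N).image k := by
    ext m
    simp only [Stmt5Aux.S, Finset.mem_filter, Finset.mem_range, Finset.mem_image]
    constructor
    · rintro ⟨hmlt, hmC⟩
      have hm : m ∈ Set.range k := by rw [hrange]; exact hmC
      obtain ⟨n, rfl⟩ := hm
      exact ⟨n, hmono.lt_iff_lt.mp hmlt, rfl⟩
    · rintro ⟨n, hnN, rfl⟩
      refine ⟨hmono.lt_iff_lt.mpr hnN, ?_⟩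
      show k n ∈ intCantorSet b D
      rw [← hrange]
      exact Set.mem_range_self n
  have hTS : Stmt5Aux.T b D α M = ∑ n ∈ Finset.range N, Stmt5Aux.W α (k n) := by
    rw [Stmt5Aux.T, hSim, Finset.sum_image (fun x _ y _ h => hmono.injective h)]
  have hcard : (Stmt5Aux.S b D M).card = N := by
    rw [hSim, Finset.card_image_of_injective _ hmono.injective, Finset.card_range]
  have hNlow : (D.card : ℝ) ^ (L - 1) ≤ (N : ℝ) := by
    have := Stmt5Aux.card_S_lower hb1 h0 hDb M hMpos
    rw [hcard, ← hLdef] at this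
    exact_mod_cast this
  have hTbound : ‖Stmt5Aux.T b D α M‖ ≤ (D.card : ℝ) * P :=
    Stmt5Aux.T_norm_bound hb1 h0 hDb L α M le_rfl
  have hNpos : (0:ℝ) < (N : ℝ) := by
    have : (1:ℕ) ≤ N := hN1
    exact_mod_cast Nat.lt_of_lt_of_le Nat.zero_lt_one this
  have hPnn : 0 ≤ P := Finset.sum_nonneg fun i _ =>
    Finset.prod_nonneg fun j _ => Stmt5Aux.F_nonneg D _
  have hnorm : ‖(N : ℂ)⁻¹ * ∑ n ∈ Finset.range N,
      Complex.exp (2 * Real.pi * Complex.I * α * (k n : ℂ))‖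
      = ‖Stmt5Aux.T b D α M‖ / (N : ℝ) := by
    rw [norm_mul, norm_inv, Complex.norm_natCast, hTS]
    rw [div_eq_inv_mul]
    congr 1
  have hpowL : ((D.card : ℝ)) ^ L = (D.card : ℝ) ^ (L - 1) * (D.card : ℝ) := by
    rw [← pow_succ]
    congr 1
    omega
  have hpowpos : (0:ℝ) < (D.card : ℝ) ^ (L - 1) := pow_pos hcpos _
  calc ‖(N : ℂ)⁻¹ * ∑ n ∈ Finset.range N,
        Complex.exp (2 * Real.pi * Complex.I * α * (k n : ℂ))‖
      = ‖Stmt5Aux.T b D α M‖ / (N : ℝ) := hnorm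
    _ ≤ ((D.card : ℝ) * P) / ((D.card : ℝ) ^ (L - 1)) := by
        exact div_le_div₀ (mul_nonneg hcpos.le hPnn) hTbound hpowpos hNlow
    _ = (D.card : ℝ) ^ 2 * (P / (D.card : ℝ) ^ L) := by
        rw [hpowL, ← mul_div_assoc, div_eq_div_iff (ne_of_gt hpowpos) (ne_of_gt (mul_pos hpowpos hcpos))]
        ring
end

section
/- Let (X, 𝒜, μ, T) be a weakly mixing measure-preserving system. Then for every integer t ≥ 1, the product system (X^t, μ^{⊗t}, T × T² × ⋯ × T^t) is weakly mixing. -/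
open MeasureTheory Filter Finset
open scoped symmDiff

/-- A measure-preserving map `T` is weakly mixing if for all measurable sets
`A, B` the Cesàro averages of `|μ(A ∩ T^{-n}B) - μ(A)μ(B)|` tend to `0`. -/
def IsWeakMixing {X : Type*} [MeasurableSpace X] (μ : Measure X) (T : X → X) :
    Prop :=
  ∀ A B : Set X, MeasurableSet A → MeasurableSet B →
    Tendsto (fun N : ℕ => (N : ℝ)⁻¹ * ∑ n ∈ Finset.Icc 1 N,
        |(μ (A ∩ T^[n] ⁻¹' B)).toReal - (μ A).toReal * (μ B).toReal|)
      atTop (nhds 0)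


section Helpers

/-- `|∏ a - ∏ b| ≤ ∑ |a - b|` for numbers in `[0,1]`. -/
lemma abs_prod_sub_prod_le {ι : Type*} (s : Finset ι) (a b : ι → ℝ)
    (ha : ∀ i ∈ s, 0 ≤ a i ∧ a i ≤ 1) (hb : ∀ i ∈ s, 0 ≤ b i ∧ b i ≤ 1) :
    |∏ i ∈ s, a i - ∏ i ∈ s, b i| ≤ ∑ i ∈ s, |a i - b i| := by
  classical
  induction s using Finset.induction_on with
  | empty => simp
  | @insert j s hj ih =>
    rw [Finset.prod_insert hj, Finset.prod_insert hj, Finset.sum_insert hj]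
    have ha' : ∀ i ∈ s, 0 ≤ a i ∧ a i ≤ 1 := fun i hi => ha i (Finset.mem_insert_of_mem hi)
    have hb' : ∀ i ∈ s, 0 ≤ b i ∧ b i ≤ 1 := fun i hi => hb i (Finset.mem_insert_of_mem hi)
    have haj := ha j (Finset.mem_insert_self j s)
    have hbj := hb j (Finset.mem_insert_self j s)
    have hprodb : |∏ i ∈ s, b i| ≤ 1 := by
      rw [abs_of_nonneg (Finset.prod_nonneg fun i hi => (hb' i hi).1)]
      exact Finset.prod_le_one (fun i hi => (hb' i hi).1) (fun i hi => (hb' i hi).2)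
    have habsaj : |a j| ≤ 1 := by rw [abs_of_nonneg haj.1]; exact haj.2
    calc |a j * ∏ i ∈ s, a i - b j * ∏ i ∈ s, b i|
        = |a j * (∏ i ∈ s, a i - ∏ i ∈ s, b i) + (a j - b j) * ∏ i ∈ s, b i| := by
          ring_nf
      _ ≤ |a j * (∏ i ∈ s, a i - ∏ i ∈ s, b i)| + |(a j - b j) * ∏ i ∈ s, b i| :=
          abs_add_le _ _
      _ = |a j| * |∏ i ∈ s, a i - ∏ i ∈ s, b i| + |a j - b j| * |∏ i ∈ s, b i| := by
          rw [abs_mul, abs_mul]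
      _ ≤ 1 * (∑ i ∈ s, |a i - b i|) + |a j - b j| * 1 := by
          have h1 := ih ha' hb'
          have h2 : |a j| * |∏ i ∈ s, a i - ∏ i ∈ s, b i| ≤ 1 * (∑ i ∈ s, |a i - b i|) :=
            mul_le_mul habsaj h1 (abs_nonneg _) one_pos.le
          have h3 : |a j - b j| * |∏ i ∈ s, b i| ≤ |a j - b j| * 1 :=
            mul_le_mul_of_nonneg_left hprodb (abs_nonneg _)
          linarith
      _ = |a j - b j| + ∑ i ∈ s, |a i - b i| := by ring

/-- Cesàro convergence to `0` of `|c n|` implies Cesàro convergence to `0`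
along multiples `|c (k n)|`. -/
lemma cesaro_mul {c : ℕ → ℝ} {k : ℕ} (hk : 1 ≤ k)
    (h : Tendsto (fun N : ℕ => (N : ℝ)⁻¹ * ∑ n ∈ Finset.Icc 1 N, |c n|) atTop (nhds 0)) :
    Tendsto (fun N : ℕ => (N : ℝ)⁻¹ * ∑ n ∈ Finset.Icc 1 N, |c (k * n)|) atTop (nhds 0) := by
  have hkpos : (0:ℝ) < k := by exact_mod_cast hk
  have hbound : ∀ N : ℕ,
      (N : ℝ)⁻¹ * ∑ n ∈ Finset.Icc 1 N, |c (k * n)| ≤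
      (k : ℝ) * (((k * N : ℕ) : ℝ)⁻¹ * ∑ n ∈ Finset.Icc 1 (k * N), |c n|) := by
    intro N
    rcases Nat.eq_zero_or_pos N with h0 | hNpos
    · simp [h0]
    have hsum : ∑ n ∈ Finset.Icc 1 N, |c (k * n)| ≤ ∑ n ∈ Finset.Icc 1 (k * N), |c n| := by
      have hinj : Set.InjOn (fun n => k * n) (Finset.Icc 1 N) := by
        intro x _ y _ hxy
        exact Nat.eq_of_mul_eq_mul_left (by omega) hxy
      rw [← Finset.sum_image (f := fun n => |c n|) (g := fun n => k * n) hinj]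
      apply Finset.sum_le_sum_of_subset_of_nonneg
      · intro m hm
        simp only [Finset.mem_image, Finset.mem_Icc] at hm ⊢
        obtain ⟨n, ⟨h1, h2⟩, rfl⟩ := hm
        constructor
        · calc 1 ≤ k := hk
            _ ≤ k * n := Nat.le_mul_of_pos_right k (by omega)
        · exact Nat.mul_le_mul_left k h2
      · intro _ _ _; exact abs_nonneg _
    have hNne : (N:ℝ) ≠ 0 := by positivity
    have hkN : ((k * N : ℕ) : ℝ) = (k:ℝ) * N := by push_cast; ring
    rw [hkN]
    rw [mul_inv]
    have : (k:ℝ) * ((k:ℝ)⁻¹ * (N:ℝ)⁻¹ * ∑ n ∈ Finset.Icc 1 (k*N), |c n|)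
        = (N:ℝ)⁻¹ * ∑ n ∈ Finset.Icc 1 (k*N), |c n| := by
      field_simp
    rw [this]
    gcongr
  have hcomp : Tendsto (fun N : ℕ => k * N) atTop atTop :=
    tendsto_atTop_mono (fun N => Nat.le_mul_of_pos_left N (by omega)) tendsto_id
  have htend : Tendsto (fun N : ℕ =>
      (k : ℝ) * (((k * N : ℕ) : ℝ)⁻¹ * ∑ n ∈ Finset.Icc 1 (k * N), |c n|)) atTop (nhds 0) := by
    have := (h.comp hcomp).const_mul (k : ℝ)
    simpa using this
  have hnonneg : ∀ N : ℕ, 0 ≤ (N : ℝ)⁻¹ * ∑ n ∈ Finset.Icc 1 N, |c (k * n)| := by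
    intro N
    apply mul_nonneg (by positivity) (Finset.sum_nonneg fun _ _ => abs_nonneg _)
  exact squeeze_zero hnonneg hbound htend

end Helpers
section Pairs

variable {Y : Type*} [MeasurableSpace Y]

/-- The weak-mixing property for a fixed pair of sets. -/
def WMP (ν : Measure Y) (S : Y → Y) (A B : Set Y) : Prop :=
  Tendsto (fun N : ℕ => (N : ℝ)⁻¹ * ∑ n ∈ Finset.Icc 1 N,
      |(ν (A ∩ S^[n] ⁻¹' B)).toReal - (ν A).toReal * (ν B).toReal|)
    atTop (nhds 0)

lemma WMP_empty_left (ν : Measure Y) (S : Y → Y) (B : Set Y) : WMP ν S ∅ B := by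
  unfold WMP
  have : ∀ N : ℕ, (N : ℝ)⁻¹ * ∑ n ∈ Finset.Icc 1 N,
      |(ν (∅ ∩ S^[n] ⁻¹' B)).toReal - (ν ∅).toReal * (ν B).toReal| = 0 := by
    intro N; simp
  simpa [this] using tendsto_const_nhds (α := ℝ) (f := atTop (α := ℕ)) (a := 0)

lemma WMP_empty_right (ν : Measure Y) (S : Y → Y) (A : Set Y) : WMP ν S A ∅ := by
  unfold WMP
  have : ∀ N : ℕ, (N : ℝ)⁻¹ * ∑ n ∈ Finset.Icc 1 N,
      |(ν (A ∩ S^[n] ⁻¹' ∅)).toReal - (ν A).toReal * (ν ∅).toReal| = 0 := by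
    intro N; simp
  simpa [this] using tendsto_const_nhds (α := ℝ) (f := atTop (α := ℕ)) (a := 0)

/-- Squeeze: if each term is bounded by the sum of three sequences of Cesàro
averages tending to zero, so does the average. -/
lemma WMP_of_le_three {ν : Measure Y} {S : Y → Y} {A B : Set Y}
    {A₁ B₁ A₂ B₂ A₃ B₃ : Set Y}
    (h₁ : WMP ν S A₁ B₁) (h₂ : WMP ν S A₂ B₂) (h₃ : WMP ν S A₃ B₃)
    (hle : ∀ n : ℕ, |(ν (A ∩ S^[n] ⁻¹' B)).toReal - (ν A).toReal * (ν B).toReal| ≤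
      |(ν (A₁ ∩ S^[n] ⁻¹' B₁)).toReal - (ν A₁).toReal * (ν B₁).toReal| +
      |(ν (A₂ ∩ S^[n] ⁻¹' B₂)).toReal - (ν A₂).toReal * (ν B₂).toReal| +
      |(ν (A₃ ∩ S^[n] ⁻¹' B₃)).toReal - (ν A₃).toReal * (ν B₃).toReal|) :
    WMP ν S A B := by
  unfold WMP
  apply squeeze_zero (g := fun N : ℕ =>
    ((N : ℝ)⁻¹ * ∑ n ∈ Finset.Icc 1 N,
      |(ν (A₁ ∩ S^[n] ⁻¹' B₁)).toReal - (ν A₁).toReal * (ν B₁).toReal|) +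
    ((N : ℝ)⁻¹ * ∑ n ∈ Finset.Icc 1 N,
      |(ν (A₂ ∩ S^[n] ⁻¹' B₂)).toReal - (ν A₂).toReal * (ν B₂).toReal|) +
    ((N : ℝ)⁻¹ * ∑ n ∈ Finset.Icc 1 N,
      |(ν (A₃ ∩ S^[n] ⁻¹' B₃)).toReal - (ν A₃).toReal * (ν B₃).toReal|))
  · intro N
    exact mul_nonneg (by positivity) (Finset.sum_nonneg fun _ _ => abs_nonneg _)
  · intro N
    rw [← mul_add, ← mul_add, ← Finset.sum_add_distrib, ← Finset.sum_add_distrib]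
    apply mul_le_mul_of_nonneg_left _ (by positivity)
    exact Finset.sum_le_sum fun n _ => hle n
  · simpa using (h₁.add h₂).add h₃

lemma toReal_union_inter {ν : Measure Y} [IsFiniteMeasure ν] {s u : Set Y}
    (hu : MeasurableSet u) :
    (ν (s ∪ u)).toReal = (ν s).toReal + (ν u).toReal - (ν (s ∩ u)).toReal := by
  have h := measure_union_add_inter (μ := ν) s hu
  have h' : (ν (s ∪ u)).toReal + (ν (s ∩ u)).toReal = (ν s).toReal + (ν u).toReal := by
    rw [← ENNReal.toReal_add (measure_ne_top _ _) (measure_ne_top _ _),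
      ← ENNReal.toReal_add (measure_ne_top _ _) (measure_ne_top _ _), h]
  linarith

lemma WMP_union_left {ν : Measure Y} [IsFiniteMeasure ν] {S : Y → Y} {A₁ A₂ B : Set Y}
    (hA₂ : MeasurableSet A₂) (hS : Measurable S) (hB : MeasurableSet B)
    (h₁ : WMP ν S A₁ B) (h₂ : WMP ν S A₂ B) (h₃ : WMP ν S (A₁ ∩ A₂) B) :
    WMP ν S (A₁ ∪ A₂) B := by
  refine WMP_of_le_three h₁ h₂ h₃ fun n => ?_
  set C := S^[n] ⁻¹' B with hC
  have hCmeas : MeasurableSet C := (hS.iterate n) hB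
  have key1 : (ν ((A₁ ∪ A₂) ∩ C)).toReal =
      (ν (A₁ ∩ C)).toReal + (ν (A₂ ∩ C)).toReal - (ν ((A₁ ∩ A₂) ∩ C)).toReal := by
    have e1 : (A₁ ∪ A₂) ∩ C = (A₁ ∩ C) ∪ (A₂ ∩ C) := Set.union_inter_distrib_right _ _ _
    have e2 : (A₁ ∩ C) ∩ (A₂ ∩ C) = (A₁ ∩ A₂) ∩ C := by
      ext x; simp only [Set.mem_inter_iff]; tauto
    rw [e1, toReal_union_inter (hA₂.inter hCmeas), e2]
  have key2 : (ν (A₁ ∪ A₂)).toReal =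
      (ν A₁).toReal + (ν A₂).toReal - (ν (A₁ ∩ A₂)).toReal := by
    simpa using toReal_union_inter (ν := ν) (s := A₁) hA₂
  rw [key1, key2]
  have habs : ∀ x y z : ℝ, |x + y - z| ≤ |x| + |y| + |z| := by
    intro x y z
    calc |x + y - z| ≤ |x + y| + |z| := abs_sub _ _
      _ ≤ |x| + |y| + |z| := by linarith [abs_add_le x y]
  calc |(ν (A₁ ∩ C)).toReal + (ν (A₂ ∩ C)).toReal - (ν (A₁ ∩ A₂ ∩ C)).toReal -
        ((ν A₁).toReal + (ν A₂).toReal - (ν (A₁ ∩ A₂)).toReal) * (ν B).toReal|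
      = |((ν (A₁ ∩ C)).toReal - (ν A₁).toReal * (ν B).toReal) +
        ((ν (A₂ ∩ C)).toReal - (ν A₂).toReal * (ν B).toReal) -
        ((ν (A₁ ∩ A₂ ∩ C)).toReal - (ν (A₁ ∩ A₂)).toReal * (ν B).toReal)| := by
        ring_nf
    _ ≤ _ := habs _ _ _

lemma WMP_union_right {ν : Measure Y} [IsFiniteMeasure ν] {S : Y → Y} {A B₁ B₂ : Set Y}
    (hA : MeasurableSet A) (hS : Measurable S) (hB₁ : MeasurableSet B₁)
    (hB₂ : MeasurableSet B₂)
    (h₁ : WMP ν S A B₁) (h₂ : WMP ν S A B₂) (h₃ : WMP ν S A (B₁ ∩ B₂)) :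
    WMP ν S A (B₁ ∪ B₂) := by
  refine WMP_of_le_three h₁ h₂ h₃ fun n => ?_
  have hpre : S^[n] ⁻¹' (B₁ ∪ B₂) = (S^[n] ⁻¹' B₁) ∪ (S^[n] ⁻¹' B₂) := rfl
  have hpre2 : S^[n] ⁻¹' (B₁ ∩ B₂) = (S^[n] ⁻¹' B₁) ∩ (S^[n] ⁻¹' B₂) := rfl
  have hmeas : MeasurableSet (A ∩ S^[n] ⁻¹' B₂) := hA.inter ((hS.iterate n) hB₂)
  have key1 : (ν (A ∩ S^[n] ⁻¹' (B₁ ∪ B₂))).toReal =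
      (ν (A ∩ S^[n] ⁻¹' B₁)).toReal + (ν (A ∩ S^[n] ⁻¹' B₂)).toReal -
      (ν (A ∩ S^[n] ⁻¹' (B₁ ∩ B₂))).toReal := by
    have e1 : A ∩ S^[n] ⁻¹' (B₁ ∪ B₂) = (A ∩ S^[n] ⁻¹' B₁) ∪ (A ∩ S^[n] ⁻¹' B₂) := by
      rw [hpre]; ext x; simp only [Set.mem_inter_iff, Set.mem_union]; tauto
    have e2 : (A ∩ S^[n] ⁻¹' B₁) ∩ (A ∩ S^[n] ⁻¹' B₂) = A ∩ S^[n] ⁻¹' (B₁ ∩ B₂) := by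
      rw [hpre2]; ext x; simp only [Set.mem_inter_iff]; tauto
    rw [e1, toReal_union_inter hmeas, e2]
  have key2 : (ν (B₁ ∪ B₂)).toReal =
      (ν B₁).toReal + (ν B₂).toReal - (ν (B₁ ∩ B₂)).toReal := by
    simpa using toReal_union_inter (ν := ν) (s := B₁) hB₂
  rw [key1, key2]
  have habs : ∀ x y z : ℝ, |x + y - z| ≤ |x| + |y| + |z| := by
    intro x y z
    calc |x + y - z| ≤ |x + y| + |z| := abs_sub _ _
      _ ≤ |x| + |y| + |z| := by linarith [abs_add_le x y]
  calc |(ν (A ∩ S^[n] ⁻¹' B₁)).toReal + (ν (A ∩ S^[n] ⁻¹' B₂)).toReal -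
        (ν (A ∩ S^[n] ⁻¹' (B₁ ∩ B₂))).toReal -
        (ν A).toReal * ((ν B₁).toReal + (ν B₂).toReal - (ν (B₁ ∩ B₂)).toReal)|
      = |((ν (A ∩ S^[n] ⁻¹' B₁)).toReal - (ν A).toReal * (ν B₁).toReal) +
        ((ν (A ∩ S^[n] ⁻¹' B₂)).toReal - (ν A).toReal * (ν B₂).toReal) -
        ((ν (A ∩ S^[n] ⁻¹' (B₁ ∩ B₂))).toReal - (ν A).toReal * (ν (B₁ ∩ B₂)).toReal)| := by
        ring_nf
    _ ≤ _ := habs _ _ _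

/-- Closure of a "good" class under finite unions of elements of a π-system. -/
lemma good_biUnion {ι Y : Type*} {C Good : Set (Set Y)}
    (hCi : ∀ s ∈ C, ∀ u ∈ C, s ∩ u ∈ C) (hCG : C ⊆ Good) (hemp : ∅ ∈ Good)
    (hrule : ∀ a b : Set Y, a ∈ Good → b ∈ Good → a ∩ b ∈ Good → a ∪ b ∈ Good)
    (F : Finset ι) (g : ι → Set Y) (hg : ∀ j ∈ F, g j ∈ C) :
    (⋃ j ∈ F, g j) ∈ Good := by
  classical
  induction F using Finset.induction_on generalizing g with
  | empty => simpa using hemp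
  | @insert a s ha ih =>
    rw [Finset.set_biUnion_insert]
    refine hrule _ _ (hCG (hg a (Finset.mem_insert_self a s)))
      (ih g fun j hj => hg j (Finset.mem_insert_of_mem hj)) ?_
    have : g a ∩ ⋃ j ∈ s, g j = ⋃ j ∈ s, g a ∩ g j := by
      simp [Set.inter_iUnion₂]
    rw [this]
    exact ih (fun j => g a ∩ g j)
      (fun j hj => hCi _ (hg a (Finset.mem_insert_self a s)) _
        (hg j (Finset.mem_insert_of_mem hj)))

end Pairs
section Product

variable {X : Type*} [MeasurableSpace X]

lemma prodMap_iterate (T : X → X) (t : ℕ) (n : ℕ) (x : Fin t → X) :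
    (fun x : Fin t → X => fun i : Fin t => T^[(i : ℕ) + 1] (x i))^[n] x
      = fun i : Fin t => T^[((i : ℕ) + 1) * n] (x i) := by
  induction n with
  | zero => simp
  | succ n ih =>
    rw [Function.iterate_succ_apply', ih]
    funext i
    show T^[(i:ℕ)+1] (T^[((i:ℕ)+1)*n] (x i)) = _
    rw [← Function.iterate_add_apply]
    congr 1
    ring

lemma toReal_le_one {ν : Measure X} [IsProbabilityMeasure ν] (s : Set X) :
    (ν s).toReal ≤ 1 := by
  have h : ν s ≤ 1 := prob_le_one
  calc (ν s).toReal ≤ ((1 : ENNReal)).toReal := ENNReal.toReal_mono (by simp) h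
    _ = 1 := by simp

lemma WMP_box (μ : Measure X) [IsProbabilityMeasure μ] (T : X → X)
    (hwm : IsWeakMixing μ T) (t : ℕ)
    (A B : Fin t → Set X) (hA : ∀ i, MeasurableSet (A i)) (hB : ∀ i, MeasurableSet (B i)) :
    WMP (Measure.pi fun _ : Fin t => μ)
      (fun x : Fin t → X => fun i : Fin t => T^[(i : ℕ) + 1] (x i))
      (Set.pi Set.univ A) (Set.pi Set.univ B) := by
  classical
  set ν := Measure.pi fun _ : Fin t => μ with hν
  set S := fun x : Fin t → X => fun i : Fin t => T^[(i : ℕ) + 1] (x i) with hS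
  have hkey : ∀ n : ℕ, Set.pi Set.univ A ∩ S^[n] ⁻¹' Set.pi Set.univ B
      = Set.pi Set.univ (fun i : Fin t => A i ∩ (T^[((i : ℕ) + 1) * n]) ⁻¹' (B i)) := by
    intro n
    ext x
    have hx : S^[n] x = fun i : Fin t => T^[((i : ℕ) + 1) * n] (x i) := prodMap_iterate T t n x
    simp only [Set.mem_inter_iff, Set.mem_preimage, hx, Set.mem_pi, Set.mem_univ, true_implies]
    constructor
    · rintro ⟨h1, h2⟩ i; exact ⟨h1 i, h2 i⟩
    · intro h; exact ⟨fun i => (h i).1, fun i => (h i).2⟩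
  -- the three measure computations
  have hvalA : ν (Set.pi Set.univ A) = ∏ i, μ (A i) := Measure.pi_pi _ _
  have hvalB : ν (Set.pi Set.univ B) = ∏ i, μ (B i) := Measure.pi_pi _ _
  have hvaln : ∀ n : ℕ, ν (Set.pi Set.univ A ∩ S^[n] ⁻¹' Set.pi Set.univ B)
      = ∏ i, μ (A i ∩ (T^[((i : ℕ) + 1) * n]) ⁻¹' (B i)) := by
    intro n; rw [hkey n]; exact Measure.pi_pi _ _
  unfold WMP
  -- pointwise bound by sum over coordinates
  have hpt : ∀ n : ℕ,
      |(ν (Set.pi Set.univ A ∩ S^[n] ⁻¹' Set.pi Set.univ B)).toReal -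
        (ν (Set.pi Set.univ A)).toReal * (ν (Set.pi Set.univ B)).toReal| ≤
      ∑ i : Fin t, |(μ (A i ∩ (T^[((i : ℕ) + 1) * n]) ⁻¹' (B i))).toReal -
        (μ (A i)).toReal * (μ (B i)).toReal| := by
    intro n
    rw [hvaln n, hvalA, hvalB, ENNReal.toReal_prod, ENNReal.toReal_prod, ENNReal.toReal_prod,
      ← Finset.prod_mul_distrib]
    exact abs_prod_sub_prod_le Finset.univ _ _
      (fun i _ => ⟨ENNReal.toReal_nonneg, toReal_le_one _⟩)
      (fun i _ => ⟨mul_nonneg ENNReal.toReal_nonneg ENNReal.toReal_nonneg,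
        mul_le_one₀ (toReal_le_one _) ENNReal.toReal_nonneg (toReal_le_one _)⟩)
  apply squeeze_zero (g := fun N : ℕ => ∑ i : Fin t, ((N : ℝ)⁻¹ *
      ∑ n ∈ Finset.Icc 1 N, |(μ (A i ∩ (T^[((i : ℕ) + 1) * n]) ⁻¹' (B i))).toReal -
        (μ (A i)).toReal * (μ (B i)).toReal|))
  · intro N
    exact mul_nonneg (by positivity) (Finset.sum_nonneg fun _ _ => abs_nonneg _)
  · intro N
    calc (N : ℝ)⁻¹ * ∑ n ∈ Finset.Icc 1 N,
          |(ν (Set.pi Set.univ A ∩ S^[n] ⁻¹' Set.pi Set.univ B)).toReal -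
            (ν (Set.pi Set.univ A)).toReal * (ν (Set.pi Set.univ B)).toReal|
        ≤ (N : ℝ)⁻¹ * ∑ n ∈ Finset.Icc 1 N, ∑ i : Fin t,
          |(μ (A i ∩ (T^[((i : ℕ) + 1) * n]) ⁻¹' (B i))).toReal -
            (μ (A i)).toReal * (μ (B i)).toReal| := by
          apply mul_le_mul_of_nonneg_left _ (by positivity)
          exact Finset.sum_le_sum fun n _ => hpt n
      _ = ∑ i : Fin t, ((N : ℝ)⁻¹ * ∑ n ∈ Finset.Icc 1 N,
          |(μ (A i ∩ (T^[((i : ℕ) + 1) * n]) ⁻¹' (B i))).toReal -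
            (μ (A i)).toReal * (μ (B i)).toReal|) := by
          rw [Finset.sum_comm, Finset.mul_sum]
  · have : (0 : ℝ) = ∑ _i : Fin t, (0 : ℝ) := by simp
    rw [this]
    apply tendsto_finset_sum
    intro i _
    exact cesaro_mul
      (c := fun m => (μ (A i ∩ (T^[m]) ⁻¹' (B i))).toReal - (μ (A i)).toReal * (μ (B i)).toReal)
      (k := (i : ℕ) + 1) (by omega) (hwm (A i) (B i) (hA i) (hB i))

end Product
section Algebra

variable {X : Type*} [MeasurableSpace X]

/-- Measurable boxes in a finite product. -/
def boxSet (X : Type*) [MeasurableSpace X] (t : ℕ) : Set (Set (Fin t → X)) :=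
  {s | ∃ f : Fin t → Set X, (∀ i, MeasurableSet (f i)) ∧ s = Set.pi Set.univ f}

/-- Finite unions of measurable boxes. -/
def unionAlg (X : Type*) [MeasurableSpace X] (t : ℕ) : Set (Set (Fin t → X)) :=
  {s | ∃ F : Finset (Fin t → Set X), (∀ f ∈ F, ∀ i, MeasurableSet (f i)) ∧
    s = ⋃ f ∈ F, Set.pi Set.univ f}

variable {t : ℕ}

lemma boxSet_measurable {s : Set (Fin t → X)} (hs : s ∈ boxSet X t) : MeasurableSet s := by
  obtain ⟨f, hf, rfl⟩ := hs
  exact MeasurableSet.univ_pi hf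

lemma boxSet_inter {s u : Set (Fin t → X)} (hs : s ∈ boxSet X t) (hu : u ∈ boxSet X t) :
    s ∩ u ∈ boxSet X t := by
  obtain ⟨f, hf, rfl⟩ := hs
  obtain ⟨g, hg, rfl⟩ := hu
  exact ⟨fun i => f i ∩ g i, fun i => (hf i).inter (hg i), (Set.pi_inter_distrib).symm⟩

lemma box_mem_unionAlg {s : Set (Fin t → X)} (hs : s ∈ boxSet X t) : s ∈ unionAlg X t := by
  classical
  obtain ⟨f, hf, rfl⟩ := hs
  exact ⟨{f}, by simpa using hf, by simp⟩

lemma empty_mem_unionAlg : (∅ : Set (Fin t → X)) ∈ unionAlg X t :=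
  ⟨∅, by simp, by simp⟩

lemma unionAlg_measurable {s : Set (Fin t → X)} (hs : s ∈ unionAlg X t) : MeasurableSet s := by
  obtain ⟨F, hF, rfl⟩ := hs
  exact F.measurableSet_biUnion fun f hf => MeasurableSet.univ_pi (hF f hf)

lemma unionAlg_union {s u : Set (Fin t → X)} (hs : s ∈ unionAlg X t) (hu : u ∈ unionAlg X t) :
    s ∪ u ∈ unionAlg X t := by
  classical
  obtain ⟨F, hF, rfl⟩ := hs
  obtain ⟨G, hG, rfl⟩ := hu
  refine ⟨F ∪ G, ?_, ?_⟩
  · intro f hf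
    rcases Finset.mem_union.1 hf with h | h
    · exact hF f h
    · exact hG f h
  · rw [Finset.set_biUnion_union]

lemma unionAlg_inter {s u : Set (Fin t → X)} (hs : s ∈ unionAlg X t) (hu : u ∈ unionAlg X t) :
    s ∩ u ∈ unionAlg X t := by
  classical
  obtain ⟨F, hF, rfl⟩ := hs
  obtain ⟨G, hG, rfl⟩ := hu
  refine ⟨(F ×ˢ G).image (fun p => fun i => p.1 i ∩ p.2 i), ?_, ?_⟩
  · intro f hf
    simp only [Finset.mem_image, Finset.mem_product] at hf
    obtain ⟨⟨p₁, p₂⟩, ⟨hp₁, hp₂⟩, rfl⟩ := hf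
    exact fun i => (hF _ hp₁ i).inter (hG _ hp₂ i)
  · rw [Finset.set_biUnion_finset_image]
    ext x
    simp only [Set.mem_inter_iff, Set.mem_iUnion, Set.mem_pi, Set.mem_univ, true_implies,
      Finset.mem_product]
    constructor
    · rintro ⟨⟨f, hf, hxf⟩, ⟨g, hg, hxg⟩⟩
      exact ⟨(f, g), ⟨hf, hg⟩, fun i => ⟨hxf i, hxg i⟩⟩
    · rintro ⟨⟨f, g⟩, ⟨hf, hg⟩, hx⟩
      exact ⟨⟨f, hf, fun i => (hx i).1⟩, ⟨g, hg, fun i => (hx i).2⟩⟩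

lemma box_compl_mem_unionAlg {f : Fin t → Set X} (hf : ∀ i, MeasurableSet (f i)) :
    (Set.pi Set.univ f)ᶜ ∈ unionAlg X t := by
  classical
  refine ⟨Finset.univ.image (fun i : Fin t =>
    Function.update (fun _ : Fin t => (Set.univ : Set X)) i (f i)ᶜ), ?_, ?_⟩
  · intro g hg
    simp only [Finset.mem_image, Finset.mem_univ, true_and] at hg
    obtain ⟨i, rfl⟩ := hg
    intro j
    rcases eq_or_ne j i with rfl | hji
    · simpa using (hf j).compl
    · simp [Function.update_apply, hji]
  · rw [Finset.set_biUnion_finset_image]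
    ext x
    simp only [Set.mem_compl_iff, Set.mem_pi, Set.mem_univ, true_implies, Set.mem_iUnion,
      Finset.mem_univ, true_and, not_forall]
    constructor
    · rintro ⟨i, hi⟩
      refine ⟨i, trivial, fun j => ?_⟩
      rcases eq_or_ne j i with rfl | hji
      · simpa using hi
      · simp [Function.update_apply, hji]
    · rintro ⟨i, -, hi⟩
      refine ⟨i, ?_⟩
      have := hi i
      simpa using this

lemma unionAlg_compl {s : Set (Fin t → X)} (hs : s ∈ unionAlg X t) : sᶜ ∈ unionAlg X t := by
  classical
  obtain ⟨F, hF, rfl⟩ := hs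
  induction F using Finset.induction_on with
  | empty =>
    refine ⟨{fun _ => Set.univ}, by simp, ?_⟩
    simp [Set.pi]
  | @insert f F hfF ih =>
    rw [Finset.set_biUnion_insert, Set.compl_union]
    refine unionAlg_inter (box_compl_mem_unionAlg (hF f (Finset.mem_insert_self f F)))
      (ih fun g hg => hF g (Finset.mem_insert_of_mem hg))

lemma isSetAlgebra_unionAlg : MeasureTheory.IsSetAlgebra (unionAlg X t) where
  empty_mem := empty_mem_unionAlg
  compl_mem _ hs := unionAlg_compl hs
  union_mem _ _ hs hu := unionAlg_union hs hu

lemma generateFrom_unionAlg :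
    (MeasurableSpace.pi : MeasurableSpace (Fin t → X)) =
      MeasurableSpace.generateFrom (unionAlg X t) := by
  apply le_antisymm
  · have heval : ∀ i : Fin t, @Measurable (Fin t → X) X
        (MeasurableSpace.generateFrom (unionAlg X t)) _ (fun x => x i) := by
      intro i s hs
      apply MeasurableSpace.measurableSet_generateFrom
      apply box_mem_unionAlg
      refine ⟨Function.update (fun _ : Fin t => (Set.univ : Set X)) i s, ?_, ?_⟩
      · intro j
        rcases eq_or_ne j i with rfl | hji
        · simpa using hs
        · simp [Function.update_apply, hji]
      · ext x
        simp only [Set.mem_preimage, Set.mem_pi, Set.mem_univ, true_implies]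
        constructor
        · intro hx j
          rcases eq_or_ne j i with rfl | hji
          · simpa using hx
          · simp [Function.update_apply, hji]
        · intro hx
          have := hx i
          simpa using this
    exact iSup_le fun i => MeasurableSpace.comap_le_iff_le_map.2 (heval i)
  · exact MeasurableSpace.generateFrom_le fun s hs => unionAlg_measurable hs

end Algebra
section Final

variable {Y : Type*} [MeasurableSpace Y]

lemma abs_toReal_sub_le {ν : Measure Y} [IsFiniteMeasure ν] (A A' : Set Y) :
    |(ν A).toReal - (ν A').toReal| ≤ (ν (A ∆ A')).toReal := by
  have key : ∀ s u : Set Y, (ν s).toReal ≤ (ν u).toReal + (ν (s ∆ u)).toReal := by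
    intro s u
    have hsub : s ⊆ u ∪ (s ∆ u) := by
      intro x hx
      by_cases hxu : x ∈ u
      · exact Or.inl hxu
      · exact Or.inr (Set.mem_symmDiff.2 (Or.inl ⟨hx, hxu⟩))
    have h1 : ν s ≤ ν u + ν (s ∆ u) := (measure_mono hsub).trans (measure_union_le _ _)
    have h2 : (ν s).toReal ≤ ((ν u) + ν (s ∆ u)).toReal :=
      ENNReal.toReal_mono (by finiteness) h1
    rwa [ENNReal.toReal_add (measure_ne_top _ _) (measure_ne_top _ _)] at h2
  rw [abs_sub_le_iff]
  constructor
  · linarith [key A A']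
  · have := key A' A
    rw [symmDiff_comm] at this
    linarith

lemma inter_symmDiff_subset (A A' C C' : Set Y) :
    (A ∩ C) ∆ (A' ∩ C') ⊆ (A ∆ A') ∪ (C ∆ C') := by
  intro x hx
  simp only [Set.mem_symmDiff, Set.mem_inter_iff, Set.mem_union] at hx ⊢
  tauto

lemma WMP_unionAlg {X : Type*} [MeasurableSpace X] (μ : Measure X) [IsProbabilityMeasure μ]
    (T : X → X) (hT : MeasurePreserving T μ μ) (hwm : IsWeakMixing μ T) (t : ℕ)
    {A B : Set (Fin t → X)} (hA : A ∈ unionAlg X t) (hB : B ∈ unionAlg X t) :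
    WMP (Measure.pi fun _ : Fin t => μ)
      (fun x : Fin t → X => fun i : Fin t => T^[(i : ℕ) + 1] (x i)) A B := by
  classical
  set ν := Measure.pi fun _ : Fin t => μ with hνdef
  set S := fun x : Fin t → X => fun i : Fin t => T^[(i : ℕ) + 1] (x i) with hSdef
  have hSmeas : Measurable S := measurable_pi_iff.mpr fun i =>
    ((hT.iterate ((i : ℕ) + 1)).measurable).comp (measurable_pi_apply i)
  -- Step 1: boxes against unionAlg sets
  have step1 : ∀ A₀ ∈ boxSet X t, ∀ B' ∈ unionAlg X t, WMP ν S A₀ B' := by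
    rintro A₀ hA₀ B' ⟨G, hG, rfl⟩
    have hA₀m : MeasurableSet A₀ := boxSet_measurable hA₀
    have := good_biUnion (C := boxSet X t)
      (Good := {B' | MeasurableSet B' ∧ WMP ν S A₀ B'})
      (fun s hs u hu => boxSet_inter hs hu)
      (fun s hs => ⟨boxSet_measurable hs, by
        obtain ⟨fA, hfA, rfl⟩ := hA₀
        obtain ⟨fB, hfB, rfl⟩ := hs
        exact WMP_box μ T hwm t fA fB hfA hfB⟩)
      ⟨MeasurableSet.empty, WMP_empty_right ν S A₀⟩
      (fun a b ha hb hab => ⟨ha.1.union hb.1,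
        WMP_union_right hA₀m hSmeas ha.1 hb.1 ha.2 hb.2 hab.2⟩)
      G (fun f => Set.pi Set.univ f)
      (fun f hf => ⟨f, hG f hf, rfl⟩)
    exact this.2
  -- Step 2: unionAlg against unionAlg
  have hBm : MeasurableSet B := unionAlg_measurable hB
  obtain ⟨F, hF, rfl⟩ := hA
  have := good_biUnion (C := boxSet X t)
    (Good := {A' | MeasurableSet A' ∧ WMP ν S A' B})
    (fun s hs u hu => boxSet_inter hs hu)
    (fun s hs => ⟨boxSet_measurable hs, step1 s hs B hB⟩)
    ⟨MeasurableSet.empty, WMP_empty_left ν S B⟩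
    (fun a b ha hb hab => ⟨ha.1.union hb.1,
      WMP_union_left hb.1 hSmeas hBm ha.2 hb.2 hab.2⟩)
    F (fun f => Set.pi Set.univ f)
    (fun f hf => ⟨f, hF f hf, rfl⟩)
  exact this.2

end Final

/-- If `T` is weakly mixing, then `T × T² × ⋯ × T^t` is weakly mixing on the
product space. -/
theorem stmt7 {X : Type*} [MeasurableSpace X] (μ : Measure X)
    [IsProbabilityMeasure μ] (T : X → X) (hT : MeasurePreserving T μ μ)
    (hwm : IsWeakMixing μ T) (t : ℕ) (ht : 1 ≤ t) :
    IsWeakMixing (Measure.pi fun _ : Fin t => μ)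
      (fun x : Fin t → X => fun i => T^[(i : ℕ) + 1] (x i)) := by
  classical
  intro A B hA hB
  set ν := Measure.pi fun _ : Fin t => μ with hνdef
  set S := fun x : Fin t → X => fun i : Fin t => T^[(i : ℕ) + 1] (x i) with hSdef
  have hSmp : MeasurePreserving S ν ν :=
    measurePreserving_pi _ _ (fun i : Fin t => hT.iterate ((i : ℕ) + 1))
  have hdense : ν.MeasureDense (unionAlg X t) :=
    Measure.MeasureDense.of_generateFrom_isSetAlgebra_finite ν isSetAlgebra_unionAlg
      generateFrom_unionAlg
  rw [show (nhds (0:ℝ)) = nhds 0 from rfl]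
  rw [NormedAddCommGroup.tendsto_nhds_zero]
  intro ε hε
  obtain ⟨A', hA'mem, hAA'⟩ := hdense.approx A hA (measure_ne_top _ _) (ε/8) (by linarith)
  obtain ⟨B', hB'mem, hBB'⟩ := hdense.approx B hB (measure_ne_top _ _) (ε/8) (by linarith)
  set dA := (ν (A ∆ A')).toReal with hdA
  set dB := (ν (B ∆ B')).toReal with hdB
  have hdAlt : dA < ε/8 :=
    (ENNReal.lt_ofReal_iff_toReal_lt (measure_ne_top _ _)).1 hAA'
  have hdBlt : dB < ε/8 :=
    (ENNReal.lt_ofReal_iff_toReal_lt (measure_ne_top _ _)).1 hBB'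
  have hdAnn : 0 ≤ dA := ENNReal.toReal_nonneg
  have hdBnn : 0 ≤ dB := ENNReal.toReal_nonneg
  have hB'm : MeasurableSet (B ∆ B') := hB.symmDiff (unionAlg_measurable hB'mem)
  have hwmp : WMP ν S A' B' := WMP_unionAlg μ T hT hwm t hA'mem hB'mem
  -- pointwise estimate
  have hpt : ∀ n : ℕ,
      |(ν (A ∩ S^[n] ⁻¹' B)).toReal - (ν A).toReal * (ν B).toReal| ≤
      |(ν (A' ∩ S^[n] ⁻¹' B')).toReal - (ν A').toReal * (ν B').toReal| + 2 * (dA + dB) := by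
    intro n
    have hpre : (ν ((S^[n] ⁻¹' B) ∆ (S^[n] ⁻¹' B'))).toReal = dB := by
      rw [← Set.preimage_symmDiff, (hSmp.iterate n).measure_preimage hB'm.nullMeasurableSet]
    have h1 : |(ν (A ∩ S^[n] ⁻¹' B)).toReal - (ν (A' ∩ S^[n] ⁻¹' B')).toReal| ≤ dA + dB := by
      calc |(ν (A ∩ S^[n] ⁻¹' B)).toReal - (ν (A' ∩ S^[n] ⁻¹' B')).toReal|
          ≤ (ν ((A ∩ S^[n] ⁻¹' B) ∆ (A' ∩ S^[n] ⁻¹' B'))).toReal := abs_toReal_sub_le _ _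
        _ ≤ ((ν (A ∆ A')) + ν ((S^[n] ⁻¹' B) ∆ (S^[n] ⁻¹' B'))).toReal := by
            apply ENNReal.toReal_mono (by finiteness)
            exact (measure_mono (inter_symmDiff_subset _ _ _ _)).trans (measure_union_le _ _)
        _ = dA + dB := by
            rw [ENNReal.toReal_add (measure_ne_top _ _) (measure_ne_top _ _), hpre]
    have h2 : |(ν A).toReal * (ν B).toReal - (ν A').toReal * (ν B').toReal| ≤ dA + dB := by
      have e : (ν A).toReal * (ν B).toReal - (ν A').toReal * (ν B').toReal =
          ((ν A).toReal - (ν A').toReal) * (ν B).toReal +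
          (ν A').toReal * ((ν B).toReal - (ν B').toReal) := by ring
      rw [e]
      calc |((ν A).toReal - (ν A').toReal) * (ν B).toReal +
            (ν A').toReal * ((ν B).toReal - (ν B').toReal)|
          ≤ |((ν A).toReal - (ν A').toReal) * (ν B).toReal| +
            |(ν A').toReal * ((ν B).toReal - (ν B').toReal)| := abs_add_le _ _
        _ = |(ν A).toReal - (ν A').toReal| * |(ν B).toReal| +
            |(ν A').toReal| * |(ν B).toReal - (ν B').toReal| := by rw [abs_mul, abs_mul]
        _ ≤ dA * 1 + 1 * dB := by
            apply add_le_add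
            · apply mul_le_mul (abs_toReal_sub_le _ _) _ (abs_nonneg _) hdAnn
              rw [abs_of_nonneg ENNReal.toReal_nonneg]; exact toReal_le_one _
            · apply mul_le_mul _ (abs_toReal_sub_le _ _) (abs_nonneg _) zero_le_one
              rw [abs_of_nonneg ENNReal.toReal_nonneg]; exact toReal_le_one _
        _ = dA + dB := by ring
    calc |(ν (A ∩ S^[n] ⁻¹' B)).toReal - (ν A).toReal * (ν B).toReal|
        ≤ |(ν (A' ∩ S^[n] ⁻¹' B')).toReal - (ν A').toReal * (ν B').toReal| +
          |(ν (A ∩ S^[n] ⁻¹' B)).toReal - (ν (A' ∩ S^[n] ⁻¹' B')).toReal| +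
          |(ν A).toReal * (ν B).toReal - (ν A').toReal * (ν B').toReal| := by
          have := abs_sub_abs_le_abs_sub ((ν (A ∩ S^[n] ⁻¹' B)).toReal -
            (ν A).toReal * (ν B).toReal)
            ((ν (A' ∩ S^[n] ⁻¹' B')).toReal - (ν A').toReal * (ν B').toReal)
          have htri : |((ν (A ∩ S^[n] ⁻¹' B)).toReal - (ν A).toReal * (ν B).toReal) -
              ((ν (A' ∩ S^[n] ⁻¹' B')).toReal - (ν A').toReal * (ν B').toReal)| ≤
              |(ν (A ∩ S^[n] ⁻¹' B)).toReal - (ν (A' ∩ S^[n] ⁻¹' B')).toReal| +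
              |(ν A).toReal * (ν B).toReal - (ν A').toReal * (ν B').toReal| := by
            have e : ((ν (A ∩ S^[n] ⁻¹' B)).toReal - (ν A).toReal * (ν B).toReal) -
                ((ν (A' ∩ S^[n] ⁻¹' B')).toReal - (ν A').toReal * (ν B').toReal) =
                ((ν (A ∩ S^[n] ⁻¹' B)).toReal - (ν (A' ∩ S^[n] ⁻¹' B')).toReal) -
                ((ν A).toReal * (ν B).toReal - (ν A').toReal * (ν B').toReal) := by ring
            rw [e]
            exact abs_sub _ _
          linarith
      _ ≤ _ := by linarith
  -- Cesàro estimate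
  have hEbound : ∀ N : ℕ, 1 ≤ N →
      (N : ℝ)⁻¹ * ∑ n ∈ Finset.Icc 1 N,
        |(ν (A ∩ S^[n] ⁻¹' B)).toReal - (ν A).toReal * (ν B).toReal| ≤
      ((N : ℝ)⁻¹ * ∑ n ∈ Finset.Icc 1 N,
        |(ν (A' ∩ S^[n] ⁻¹' B')).toReal - (ν A').toReal * (ν B').toReal|) + 2 * (dA + dB) := by
    intro N hN
    have hNpos : (0:ℝ) < N := by exact_mod_cast hN
    have hcard : (Finset.Icc 1 N).card = N := by rw [Nat.card_Icc]; omega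
    calc (N : ℝ)⁻¹ * ∑ n ∈ Finset.Icc 1 N,
          |(ν (A ∩ S^[n] ⁻¹' B)).toReal - (ν A).toReal * (ν B).toReal|
        ≤ (N : ℝ)⁻¹ * ∑ n ∈ Finset.Icc 1 N,
          (|(ν (A' ∩ S^[n] ⁻¹' B')).toReal - (ν A').toReal * (ν B').toReal| + 2 * (dA + dB)) := by
          apply mul_le_mul_of_nonneg_left _ (by positivity)
          exact Finset.sum_le_sum fun n _ => hpt n
      _ = ((N : ℝ)⁻¹ * ∑ n ∈ Finset.Icc 1 N,
          |(ν (A' ∩ S^[n] ⁻¹' B')).toReal - (ν A').toReal * (ν B').toReal|) +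
          (N : ℝ)⁻¹ * (N * (2 * (dA + dB))) := by
          rw [Finset.sum_add_distrib, Finset.sum_const, hcard, mul_add]
          rw [nsmul_eq_mul]
      _ = _ := by
          field_simp
  -- conclude
  have hev := NormedAddCommGroup.tendsto_nhds_zero.mp hwmp (ε/2) (by linarith)
  filter_upwards [hev, eventually_ge_atTop 1] with N h1 h2
  have hnn : 0 ≤ (N : ℝ)⁻¹ * ∑ n ∈ Finset.Icc 1 N,
      |(ν (A ∩ S^[n] ⁻¹' B)).toReal - (ν A).toReal * (ν B).toReal| :=
    mul_nonneg (by positivity) (Finset.sum_nonneg fun _ _ => abs_nonneg _)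
  rw [Real.norm_eq_abs, abs_of_nonneg hnn]
  have hE' := hEbound N h2
  have h1' : (N : ℝ)⁻¹ * ∑ n ∈ Finset.Icc 1 N,
      |(ν (A' ∩ S^[n] ⁻¹' B')).toReal - (ν A').toReal * (ν B').toReal| < ε/2 := by
    have := le_abs_self ((N : ℝ)⁻¹ * ∑ n ∈ Finset.Icc 1 N,
      |(ν (A' ∩ S^[n] ⁻¹' B')).toReal - (ν A').toReal * (ν B').toReal|)
    rw [Real.norm_eq_abs] at h1
    linarith
  linarith
end

section
/- (Cantor van der Waerden, minimal case) Let (X, T) be a minimal topological dynamical system on a compact metric space with T continuous, let U ⊆ X be a nonempty open set, and let n ≥ 1. Let K be an integer Cantor set C_{b,D} with 0 ∈ D. Then there exist y ∈ X and r ∈ K \ {0} such that y, T^r y, T^{2r} y, ..., T^{(n−1)r} y all lie in U. -/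
open Filter Finset

private lemma digits_add_high {b d : ℕ} (hb : 2 ≤ b) (hd : d < b) {D : Finset ℕ}
    (hdD : d ∈ D) (h0 : 0 ∈ D) :
    ∀ k m, m < b ^ k → (∀ u ∈ Nat.digits b m, u ∈ D) →
      ∀ u ∈ Nat.digits b (m + d * b ^ k), u ∈ D := by
  intro k
  induction k with
  | zero =>
    intro m hm hmD u hu
    have hm0 : m = 0 := by simpa using Nat.lt_one_iff.1 (by simpa using hm)
    subst hm0
    rcases eq_or_ne d 0 with hd0 | hd0
    · subst hd0; simp at hu
    · have : Nat.digits b (0 + d * b ^ 0) = [d] := by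
        simp only [pow_zero, mul_one, zero_add]
        rw [Nat.digits_def' (by omega : 1 < b) (Nat.pos_of_ne_zero hd0)]
        rw [Nat.mod_eq_of_lt hd, Nat.div_eq_of_lt hd]
        simp
      rw [this] at hu
      simp at hu
      subst hu
      exact hdD
  | succ k ih =>
    intro m hm hmD u hu
    rcases Nat.eq_zero_or_pos (m + d * b ^ (k + 1)) with hM | hM
    · rw [hM] at hu; simp at hu
    rw [Nat.digits_def' (by omega : 1 < b) hM] at hu
    have hmod : (m + d * b ^ (k + 1)) % b = m % b := by
      have : d * b ^ (k + 1) = d * b ^ k * b := by ring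
      rw [this, Nat.add_mul_mod_self_right]
    have hdiv : (m + d * b ^ (k + 1)) / b = m / b + d * b ^ k := by
      have : d * b ^ (k + 1) = d * b ^ k * b := by ring
      rw [this, Nat.add_mul_div_right _ _ (by omega : 0 < b)]
    have hmbD : ∀ u ∈ Nat.digits b (m / b), u ∈ D := by
      rcases Nat.eq_zero_or_pos m with hm0 | hm0
      · subst hm0; simp
      · intro u hu
        apply hmD
        rw [Nat.digits_def' (by omega : 1 < b) hm0]
        exact List.mem_cons_of_mem _ hu
    simp only [List.mem_cons] at hu
    rcases hu with hu | hu
    · -- head digit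
      rw [hu, hmod]
      rcases Nat.eq_zero_or_pos m with hm0 | hm0
      · subst hm0; simpa using h0
      · have : m % b ∈ Nat.digits b m := by
          rw [Nat.digits_def' (by omega : 1 < b) hm0]
          exact List.mem_cons_self
        exact hmD _ this
    · rw [hdiv] at hu
      apply ih (m / b) _ hmbD u hu
      rw [Nat.div_lt_iff_lt_mul (by omega : 0 < b)]
      calc m < b ^ (k + 1) := hm
        _ = b ^ k * b := by ring

private lemma geom_sum_pred (b : ℕ) (hb : 1 ≤ b) :
    ∀ a, ∑ k ∈ Finset.range a, (b - 1) * b ^ k = b ^ a - 1 := by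
  intro a
  induction a with
  | zero => simp
  | succ a ih =>
    rw [Finset.sum_range_succ, ih]
    have hp : 1 ≤ b ^ a := Nat.one_le_pow _ _ (by omega)
    have h1 : (b - 1) * b ^ a = b * b ^ a - 1 * b ^ a := by
      rw [Nat.sub_mul]
    have h2 : b ^ a ≤ b * b ^ a := Nat.le_mul_of_pos_left _ (by omega)
    rw [pow_succ, h1]
    rw [mul_comm (b ^ a) b]
    omega

private lemma sum_mem_cantor {b d : ℕ} (hb : 2 ≤ b) (hd : d < b) {D : Finset ℕ}
    (hdD : d ∈ D) (h0 : 0 ∈ D) (S : Finset ℕ) :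
    (∑ k ∈ S, d * b ^ k) ∈ intCantorSet b D := by
  induction S using Finset.induction_on_max with
  | empty => intro u hu; simp at hu
  | insert a S ha ih =>
    have haS : a ∉ S := fun h => lt_irrefl a (ha a h)
    rw [Finset.sum_insert haS]
    have hlt : (∑ k ∈ S, d * b ^ k) < b ^ a := by
      have h1 : (∑ k ∈ S, d * b ^ k) ≤ ∑ k ∈ S, (b - 1) * b ^ k :=
        Finset.sum_le_sum fun k _ => Nat.mul_le_mul_right _ (by omega)
      have h2 : (∑ k ∈ S, (b - 1) * b ^ k) ≤ ∑ k ∈ Finset.range a, (b - 1) * b ^ k :=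
        Finset.sum_le_sum_of_subset (fun k hk => Finset.mem_range.2 (ha k hk))
      have h3 := geom_sum_pred b (by omega) a
      have hp : 1 ≤ b ^ a := Nat.one_le_pow _ _ (by omega)
      omega
    rw [add_comm]
    exact digits_add_high hb hd hdD h0 a _ hlt ih

/-- Cantor van der Waerden theorem, minimal case: in a minimal topological
dynamical system, every nonempty open set contains an arithmetic progression
`y, T^r y, …, T^{(n-1)r} y` with step `r` a nonzero element of the Cantor
set. -/
theorem stmt12 {X : Type*} [MetricSpace X] [CompactSpace X]
    (T : X → X) (hT : Continuous T)
    (hmin : ∀ F : Set X, IsClosed F → T '' F ⊆ F → F = ∅ ∨ F = Set.univ)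
    (b : ℕ) (D : Finset ℕ) (hb : 3 ≤ b) (hDb : ∀ d ∈ D, d < b)
    (hc2 : 2 ≤ D.card) (hcb : D.card < b) (h0 : 0 ∈ D)
    (U : Set X) (hU : IsOpen U) (hUne : U.Nonempty) (n : ℕ) (hn : 1 ≤ n) :
    ∃ (y : X) (r : ℕ), r ∈ intCantorSet b D ∧ r ≠ 0 ∧
      ∀ i < n, T^[i * r] y ∈ U := by
  classical
  obtain ⟨x0, hx0⟩ := hUne
  -- Step 1: the union of preimages covers X
  have hopen : ∀ k : ℕ, IsOpen (T^[k] ⁻¹' U) := fun k => (hT.iterate k).isOpen_preimage _ hU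
  have hV : (⋃ k : ℕ, T^[k] ⁻¹' U) = Set.univ := by
    have hF := hmin ((⋃ k : ℕ, T^[k] ⁻¹' U)ᶜ)
      (isOpen_iUnion hopen).isClosed_compl ?_
    · rcases hF with h | h
      · rwa [Set.compl_empty_iff] at h
      · exfalso
        have hx : x0 ∈ (⋃ k : ℕ, T^[k] ⁻¹' U)ᶜ := h ▸ Set.mem_univ _
        exact hx (Set.mem_iUnion.2 ⟨0, by simpa using hx0⟩)
    · rintro _ ⟨x, hx, rfl⟩ hmem
      apply hx
      obtain ⟨k, hk⟩ := Set.mem_iUnion.1 hmem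
      exact Set.mem_iUnion.2 ⟨k + 1, by
        simpa [Function.iterate_succ_apply] using hk⟩
  -- Step 2: finite subcover
  obtain ⟨t, ht⟩ := IsCompact.elim_finite_subcover isCompact_univ
    (fun k : ℕ => T^[k] ⁻¹' U) hopen (by rw [hV])
  -- Step 3: the coloring
  have hcol : ∀ m : ℕ, ∃ k, k ∈ t ∧ T^[k + m] x0 ∈ U := by
    intro m
    have hmem := ht (Set.mem_univ (T^[m] x0))
    rw [Set.mem_iUnion₂] at hmem
    obtain ⟨k, hk, hmem⟩ := hmem
    exact ⟨k, hk, by rw [Function.iterate_add_apply]; exact hmem⟩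
  let κf : ℕ → {k // k ∈ t} := fun m => ⟨(hcol m).choose, (hcol m).choose_spec.1⟩
  have hκf : ∀ m, T^[(κf m : ℕ) + m] x0 ∈ U := fun m => (hcol m).choose_spec.2
  -- pick a nonzero digit
  obtain ⟨d, hdD, hd0⟩ : ∃ d ∈ D, d ≠ 0 := by
    by_contra h
    push_neg at h
    have hsub : D ⊆ {0} := fun u hu => by simp [h u hu]
    have := Finset.card_le_card hsub
    simp at this
    omega
  have hdb : d < b := hDb d hdD
  -- Step 4: Hales-Jewett
  obtain ⟨ι, _inst, hHJ⟩ :=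
    Combinatorics.Line.exists_mono_in_high_dimension (Fin n) {k // k ∈ t}
  let e : ι → ℕ := fun i => (Fintype.equivFin ι i : ℕ)
  have he : Function.Injective e := fun i j hij => by
    apply (Fintype.equivFin ι).injective
    exact Fin.val_injective hij
  let coef : ι → ℕ := fun i => d * b ^ (e i)
  let φ : (ι → Fin n) → ℕ := fun w => ∑ i, coef i * (w i : ℕ)
  obtain ⟨l, c, hc⟩ := hHJ (fun w => κf (φ w))
  have hnz : 0 < n := hn
  let z : Fin n := ⟨0, hnz⟩
  set R : ℕ := ∑ i ∈ Finset.univ.filter (fun i => l.idxFun i = none), coef i with hRdef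
  set A : ℕ := ∑ i ∈ Finset.univ.filter (fun i => ¬ l.idxFun i = none),
      coef i * ((l.idxFun i).getD z : ℕ) with hAdef
  have hφ : ∀ a : Fin n, φ (l a) = A + (a : ℕ) * R := by
    intro a
    have hterm : ∀ i : ι, coef i * ((l a i : Fin n) : ℕ) =
        (if l.idxFun i = none then (a : ℕ) * coef i
         else coef i * ((l.idxFun i).getD z : ℕ)) := by
      intro i
      show coef i * (((l.idxFun i).getD a : Fin n) : ℕ) = _
      cases h : l.idxFun i with
      | none => simp [mul_comm]
      | some v => simp
    calc φ (l a) = ∑ i, (if l.idxFun i = none then (a : ℕ) * coef i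
         else coef i * ((l.idxFun i).getD z : ℕ)) :=
        Finset.sum_congr rfl fun i _ => hterm i
      _ = (∑ i ∈ Finset.univ.filter (fun i => l.idxFun i = none), (a : ℕ) * coef i)
          + A := by rw [Finset.sum_ite]
      _ = (a : ℕ) * R + A := by rw [hRdef, Finset.mul_sum]
      _ = A + (a : ℕ) * R := add_comm _ _
  -- R is nonzero
  have hRne : R ≠ 0 := by
    obtain ⟨i0, hi0⟩ := l.proper
    have hle : coef i0 ≤ R :=
      Finset.single_le_sum (f := coef) (fun i _ => Nat.zero_le _)
        (Finset.mem_filter.2 ⟨Finset.mem_univ _, hi0⟩)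
    have hpos : 0 < coef i0 :=
      Nat.mul_pos (Nat.pos_of_ne_zero hd0) (pow_pos (by omega : 0 < b) _)
    omega
  -- R is in the Cantor set
  have hRC : R ∈ intCantorSet b D := by
    have himg : R = ∑ k ∈ (Finset.univ.filter (fun i => l.idxFun i = none)).image e,
        d * b ^ k := by
      rw [Finset.sum_image (fun i _ j _ hij => he hij)]
    rw [himg]
    exact sum_mem_cantor (by omega) hdb hdD h0 _
  -- Conclusion
  refine ⟨T^[(c : ℕ) + A] x0, R, hRC, hRne, ?_⟩
  intro i hi
  have hcolor : κf (A + i * R) = c := by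
    have hca := hc ⟨i, hi⟩
    simp only at hca
    rw [hφ ⟨i, hi⟩] at hca
    exact hca
  have hval : ((κf (A + i * R) : ℕ)) = (c : ℕ) := by rw [hcolor]
  have hmem := hκf (A + i * R)
  rw [hval] at hmem
  rw [← Function.iterate_add_apply]
  have harith : i * R + ((c : ℕ) + A) = (c : ℕ) + (A + i * R) := by ring
  rw [harith]
  exact hmem
end

section
/- (Cantor van der Waerden) Let (X, T) be a topological dynamical system on a compact metric space and (U_α)_{α∈A} an open cover of X. Let K = C_{b,D} be an integer Cantor set with 0 ∈ D. Then for every n ≥ 1 there exist α ∈ A, x ∈ X, and r ∈ K \ {0} such that x, T^r x, ..., T^{(n−1)r} x ∈ U_α. -/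
open Filter Finset

lemma cantor_aux (b d : ℕ) (hb : 2 ≤ b) (hd : d < b) (D : Finset ℕ)
    (hdD : d ∈ D) (h0 : 0 ∈ D) :
    ∀ N (s : Finset ℕ), s ⊆ Finset.range N →
      (d * ∑ k ∈ s, b ^ k) ∈ intCantorSet b D := by
  intro N
  induction N with
  | zero =>
    intro s hs
    have : s = ∅ := subset_empty.mp (by simpa using hs)
    subst this
    simp [intCantorSet]
  | succ N ih =>
    intro s hs
    set t : Finset ℕ := (s.erase 0).image (· - 1) with ht
    have htN : t ⊆ Finset.range N := by
      intro j hj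
      simp only [ht, mem_image, mem_erase] at hj
      obtain ⟨k, ⟨hk0, hks⟩, rfl⟩ := hj
      have := mem_range.mp (hs hks)
      exact mem_range.mpr (by omega)
    have hinj : ∀ k1 ∈ s.erase 0, ∀ k2 ∈ s.erase 0, k1 - 1 = k2 - 1 → k1 = k2 := by
      intro k1 h1 k2 h2 h
      have := (mem_erase.mp h1).1
      have := (mem_erase.mp h2).1
      omega
    have hsum : ∑ k ∈ s.erase 0, b ^ k = b * ∑ j ∈ t, b ^ j := by
      rw [ht, Finset.sum_image hinj, Finset.mul_sum]
      refine Finset.sum_congr rfl fun k hk => ?_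
      have hk0 := (mem_erase.mp hk).1
      rw [← pow_succ']
      congr 1
      omega
    set c₀ : ℕ := if 0 ∈ s then 1 else 0 with hc₀
    have hsplit : ∑ k ∈ s, b ^ k = c₀ + b * ∑ j ∈ t, b ^ j := by
      rw [← hsum, hc₀]
      by_cases h : 0 ∈ s
      · rw [if_pos h, ← Finset.add_sum_erase _ _ h]; norm_num
      · rw [if_neg h, Finset.erase_eq_of_notMem h]; norm_num
    set M : ℕ := d * ∑ j ∈ t, b ^ j with hM
    have hm : d * ∑ k ∈ s, b ^ k = d * c₀ + b * M := by
      rw [hsplit]; ring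
    have hdc : d * c₀ < b := by
      have : c₀ ≤ 1 := by rw [hc₀]; split <;> omega
      calc d * c₀ ≤ d * 1 := Nat.mul_le_mul_left d this
        _ < b := by omega
    intro x hx
    rcases Nat.eq_zero_or_pos (d * ∑ k ∈ s, b ^ k) with h0' | hpos
    · rw [h0'] at hx; simp at hx
    rw [Nat.digits_def' (by omega : 1 < b) hpos, hm] at hx
    rw [Nat.add_mul_mod_self_left, Nat.mod_eq_of_lt hdc,
        Nat.add_mul_div_left _ _ (by omega : 0 < b),
        Nat.div_eq_of_lt hdc, Nat.zero_add] at hx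
    rcases List.mem_cons.mp hx with rfl | hx'
    · rw [hc₀]; split
      · simpa using hdD
      · simpa using h0
    · exact ih t htN x hx'

/-- Cantor van der Waerden theorem: for any topological dynamical system and
any open cover, some member of the cover contains an arithmetic progression
`x, T^r x, …, T^{(n-1)r} x` with step `r` a nonzero element of the Cantor
set. -/
theorem stmt13 {X : Type*} [MetricSpace X] [CompactSpace X] [Nonempty X]
    (T : X → X) (hT : Continuous T)
    (b : ℕ) (D : Finset ℕ) (hb : 3 ≤ b) (hDb : ∀ d ∈ D, d < b)
    (hc2 : 2 ≤ D.card) (hcb : D.card < b) (h0 : 0 ∈ D)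
    {ι : Type*} (U : ι → Set X) (hUopen : ∀ α, IsOpen (U α))
    (hcover : ⋃ α, U α = Set.univ) (n : ℕ) (hn : 1 ≤ n) :
    ∃ (α : ι) (x : X) (r : ℕ), r ∈ intCantorSet b D ∧ r ≠ 0 ∧
      ∀ i < n, T^[i * r] x ∈ U α := by
  classical
  -- pick a nonzero digit d
  obtain ⟨d, hdD, hd0⟩ : ∃ d ∈ D, d ≠ 0 := by
    by_contra h
    push_neg at h
    have : D ⊆ {0} := fun x hx => by simp [h x hx]
    have := Finset.card_le_card this
    simp at this
    omega
  have hdb : d < b := hDb d hdD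
  obtain ⟨x₀⟩ := ‹Nonempty X›
  -- finite subcover
  obtain ⟨t, ht⟩ := isCompact_univ.elim_finite_subcover U hUopen
    (by rw [hcover])
  have htne : ∀ m : ℕ, ∃ i ∈ t, T^[m] x₀ ∈ U i := by
    intro m
    have := ht (Set.mem_univ (T^[m] x₀))
    simpa using this
  let χ : ℕ → {i // i ∈ t} := fun m => ⟨(htne m).choose, (htne m).choose_spec.1⟩
  have hχ : ∀ m, T^[m] x₀ ∈ U (χ m) := fun m => (htne m).choose_spec.2
  -- Hales-Jewett
  obtain ⟨ι', _inst, hHJ⟩ :=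
    Combinatorics.Line.exists_mono_in_high_dimension (Fin n) {i // i ∈ t}
  let e : ι' ≃ Fin (Fintype.card ι') := Fintype.equivFin ι'
  let g : (ι' → Fin n) → ℕ := fun v => ∑ i, (v i : ℕ) * (d * b ^ (e i : ℕ))
  obtain ⟨l, c, hl⟩ := hHJ (fun v => χ (g v))
  set s : Finset ι' := Finset.univ.filter (fun i => l.idxFun i = none) with hs
  set r : ℕ := d * ∑ i ∈ s, b ^ (e i : ℕ) with hr
  have hsne : s.Nonempty := by
    obtain ⟨i, hi⟩ := l.proper
    exact ⟨i, by simp [hs, hi]⟩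
  have hr0 : r ≠ 0 := by
    have : 0 < ∑ i ∈ s, b ^ (e i : ℕ) :=
      Finset.sum_pos (fun i _ => pow_pos (by omega) _) hsne
    positivity
  -- r is in the Cantor set
  have hrC : r ∈ intCantorSet b D := by
    have hinj : ∀ i ∈ s, ∀ j ∈ s, (e i : ℕ) = (e j : ℕ) → i = j := by
      intro i _ j _ h
      exact e.injective (Fin.val_injective h)
    have : ∑ i ∈ s, b ^ (e i : ℕ) = ∑ k ∈ s.image (fun i => (e i : ℕ)), b ^ k := by
      rw [Finset.sum_image hinj]
    rw [hr, this]
    refine cantor_aux b d (by omega) hdb D hdD h0 (Fintype.card ι') _ ?_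
    intro k hk
    simp only [Finset.mem_image] at hk
    obtain ⟨i, _, rfl⟩ := hk
    exact Finset.mem_range.mpr (e i).isLt
  -- the line is arithmetic
  let z : Fin n := ⟨0, hn⟩
  have hgl : ∀ x : Fin n, g (l x) = (x : ℕ) * r + g (l z) := by
    intro x
    have key : ∀ y : Fin n, g (l y) =
        (y : ℕ) * r + ∑ i ∈ sᶜ, ((l y) i : ℕ) * (d * b ^ (e i : ℕ)) := by
      intro y
      have := (Finset.sum_filter_add_sum_filter_not Finset.univ
        (fun i => l.idxFun i = none)
        (fun i => ((l y) i : ℕ) * (d * b ^ (e i : ℕ))))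
      have hcompl : Finset.univ.filter (fun i => ¬ l.idxFun i = none) = sᶜ := by
        ext i; simp [hs]
      rw [hcompl] at this
      have hson : ∀ i ∈ s, ((l y) i : ℕ) * (d * b ^ (e i : ℕ))
          = (y : ℕ) * (d * b ^ (e i : ℕ)) := by
        intro i hi
        have : l.idxFun i = none := by simpa [hs] using hi
        simp [Combinatorics.Line.coe_apply, this]
      calc g (l y) = ∑ i ∈ s, ((l y) i : ℕ) * (d * b ^ (e i : ℕ))
            + ∑ i ∈ sᶜ, ((l y) i : ℕ) * (d * b ^ (e i : ℕ)) := this.symm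
        _ = (y : ℕ) * r + ∑ i ∈ sᶜ, ((l y) i : ℕ) * (d * b ^ (e i : ℕ)) := by
            have hyr : ∑ i ∈ s, (y : ℕ) * (d * b ^ (e i : ℕ)) = (y : ℕ) * r := by
              rw [hr, Finset.mul_sum, Finset.mul_sum]
              try exact Finset.sum_congr rfl fun i _ => by ring
            rw [Finset.sum_congr rfl hson, hyr]
    have hfix : ∀ i ∈ sᶜ, ((l x) i : ℕ) = ((l z) i : ℕ) := by
      intro i hi
      have : ¬ l.idxFun i = none := by simpa [hs] using hi
      obtain ⟨a, ha⟩ := Option.ne_none_iff_exists'.mp this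
      simp [Combinatorics.Line.coe_apply, ha]
    rw [key x, key z]
    simp only [z, Fin.val_mk, zero_mul, zero_add]
    congr 1
    exact Finset.sum_congr rfl fun i hi => by rw [hfix i hi]
  refine ⟨(c : {i // i ∈ t}).1, T^[g (l z)] x₀, r, hrC, hr0, ?_⟩
  intro i hi
  have hmem := hχ (g (l ⟨i, hi⟩))
  have h2 : χ (g (l ⟨i, hi⟩)) = c := hl ⟨i, hi⟩
  rw [h2] at hmem
  rw [hgl ⟨i, hi⟩] at hmem
  rwa [Function.iterate_add_apply] at hmem
end
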